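/- arXiv:2007.06650 — 9 statements merged into one kernel-verified Lean document; each statement's English description precedes it below -/
import Mathlib

section
/- If K is a (κ, γ)-strongly stable controller for the system (A, B) with κ ≥ 1, and matrices Â, B̂ satisfy ‖A − Â‖ ≤ ε and ‖B − B̂‖ ≤ ε in spectral norm, then K is (κ, γ − 2εκ²)-strongly stable for (Â, B̂). -/
open scoped Matrix.Norms.L2Operator

/-- `K` is a `(κ, γ)`-strongly stable controller for the system `(A, B)`:
`‖K‖ ≤ κ` and `A + BK = H L H⁻¹` with `‖H‖ ‖H⁻¹‖ ≤ κ` and `‖L‖ ≤ 1 - γ`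
(all norms are spectral norms). -/
def StronglyStable {dx du : ℕ} (A : Matrix (Fin dx) (Fin dx) ℝ)
    (B : Matrix (Fin dx) (Fin du) ℝ) (K : Matrix (Fin du) (Fin dx) ℝ)
    (κ γ : ℝ) : Prop :=
  ‖K‖ ≤ κ ∧ ∃ H L : Matrix (Fin dx) (Fin dx) ℝ, IsUnit H ∧
    A + B * K = H * L * H⁻¹ ∧ ‖H‖ * ‖H⁻¹‖ ≤ κ ∧ ‖L‖ ≤ 1 - γ

theorem stmt0 {dx du : ℕ} (A Ahat : Matrix (Fin dx) (Fin dx) ℝ)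
    (B Bhat : Matrix (Fin dx) (Fin du) ℝ) (K : Matrix (Fin du) (Fin dx) ℝ)
    (κ γ ε : ℝ) (hκ : 1 ≤ κ)
    (hss : StronglyStable A B K κ γ)
    (hA : ‖A - Ahat‖ ≤ ε) (hB : ‖B - Bhat‖ ≤ ε) :
    StronglyStable Ahat Bhat K κ (γ - 2 * ε * κ ^ 2) := by
  obtain ⟨hK, H, L, hH, heq, hHn, hLn⟩ := hss
  have hdet : IsUnit H.det := (Matrix.isUnit_iff_isUnit_det H).mp hH
  have hHinv : H⁻¹ * H = 1 := Matrix.nonsing_inv_mul H hdet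
  have hHinv' : H * H⁻¹ = 1 := Matrix.mul_nonsing_inv H hdet
  set Δ : Matrix (Fin dx) (Fin dx) ℝ := (Ahat - A) + (Bhat - B) * K with hΔ
  refine ⟨hK, H, L + H⁻¹ * Δ * H, hH, ?_, hHn, ?_⟩
  · have : Ahat + Bhat * K = (A + B * K) + Δ := by rw [hΔ, Matrix.sub_mul]; abel
    rw [this, heq]
    have : H * (L + H⁻¹ * Δ * H) * H⁻¹
        = H * L * H⁻¹ + (H * H⁻¹) * Δ * (H * H⁻¹) := by noncomm_ring
    rw [this, hHinv']
    noncomm_ring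
  · have hε : 0 ≤ ε := le_trans (norm_nonneg _) hA
    have hκ0 : (0:ℝ) ≤ κ := le_trans zero_le_one hκ
    have hΔn : ‖Δ‖ ≤ ε + ε * κ := by
      calc ‖Δ‖ ≤ ‖Ahat - A‖ + ‖(Bhat - B) * K‖ := norm_add_le _ _
        _ ≤ ‖Ahat - A‖ + ‖Bhat - B‖ * ‖K‖ := by
            have := Matrix.l2_opNorm_mul (Bhat - B) K
            linarith
        _ ≤ ε + ε * κ := by
            rw [norm_sub_rev] at hA hB
            have := mul_le_mul hB hK (norm_nonneg K) hε
            linarith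
    have h1 : ‖H⁻¹ * Δ * H‖ ≤ ‖H⁻¹‖ * ‖Δ‖ * ‖H‖ := by
      calc ‖H⁻¹ * Δ * H‖ ≤ ‖H⁻¹ * Δ‖ * ‖H‖ := Matrix.l2_opNorm_mul _ _
        _ ≤ ‖H⁻¹‖ * ‖Δ‖ * ‖H‖ := by
            have := Matrix.l2_opNorm_mul H⁻¹ Δ
            have : ‖H⁻¹ * Δ‖ ≤ ‖H⁻¹‖ * ‖Δ‖ := this
            exact mul_le_mul_of_nonneg_right this (norm_nonneg _)
    have h2 : ‖H⁻¹‖ * ‖Δ‖ * ‖H‖ ≤ κ * (ε + ε * κ) := by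
      have hH1 : ‖H⁻¹‖ * ‖H‖ ≤ κ := by rw [mul_comm]; exact hHn
      have := mul_le_mul hH1 hΔn (norm_nonneg Δ)
        (by positivity)
      calc ‖H⁻¹‖ * ‖Δ‖ * ‖H‖ = (‖H⁻¹‖ * ‖H‖) * ‖Δ‖ := by ring
        _ ≤ κ * (ε + ε * κ) := this
    have h3 : κ * (ε + ε * κ) ≤ 2 * ε * κ ^ 2 := by nlinarith [mul_le_mul_of_nonneg_left hκ (mul_nonneg hε hκ0)]
    calc ‖L + H⁻¹ * Δ * H‖ ≤ ‖L‖ + ‖H⁻¹ * Δ * H‖ := norm_add_le _ _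
      _ ≤ (1 - γ) + 2 * ε * κ ^ 2 := by linarith
      _ = 1 - (γ - 2 * ε * κ ^ 2) := by ring
end

section
/- Let K be (κ̃, γ̃)-strongly stable for (A, B) with κ̃ ≥ 1, and suppose ‖w_t‖ ≤ 1 for all t. If ln(γ̃ ‖x_1‖) ≥ 0 and T₂ ≥ ln(γ̃‖x_1‖)/γ̃, then under x_{t+1} = (A+BK)x_t + w_t, the state satisfies ‖x_{T₂+1}‖ ≤ 2κ̃/γ̃. -/
open scoped Matrix.Norms.L2Operator

/-- The Euclidean (ℓ²) norm of a vector. -/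
noncomputable def enorm' {n : ℕ} (v : Fin n → ℝ) : ℝ := Real.sqrt (∑ i, v i ^ 2)

lemma enorm'_eq {n : ℕ} (v : Fin n → ℝ) :
    enorm' v = ‖(EuclideanSpace.equiv (Fin n) ℝ).symm v‖ := by
  simp [enorm', EuclideanSpace.norm_eq, Real.norm_eq_abs, sq_abs]

lemma enorm'_nonneg {n : ℕ} (v : Fin n → ℝ) : 0 ≤ enorm' v :=
  Real.sqrt_nonneg _

lemma enorm'_add_le {n : ℕ} (u v : Fin n → ℝ) :
    enorm' (u + v) ≤ enorm' u + enorm' v := by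
  simp only [enorm'_eq]
  rw [map_add]
  exact norm_add_le _ _

lemma enorm'_sum_le {n : ℕ} (s : Finset ℕ) (f : ℕ → Fin n → ℝ) :
    enorm' (∑ i ∈ s, f i) ≤ ∑ i ∈ s, enorm' (f i) := by
  simp only [enorm'_eq]
  rw [map_sum]
  exact norm_sum_le _ _

lemma enorm'_mulVec_le {n : ℕ} (M : Matrix (Fin n) (Fin n) ℝ) (v : Fin n → ℝ) :
    enorm' (M.mulVec v) ≤ ‖M‖ * enorm' v := by
  simp only [enorm'_eq]
  exact M.l2_opNorm_mulVec ((EuclideanSpace.equiv (Fin n) ℝ).symm v)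

theorem stmt3 {dx du : ℕ} (A : Matrix (Fin dx) (Fin dx) ℝ)
    (B : Matrix (Fin dx) (Fin du) ℝ) (K : Matrix (Fin du) (Fin dx) ℝ)
    (κ γ : ℝ) (hκ : 1 ≤ κ) (hγ0 : 0 < γ) (hγ1 : γ < 1)
    (hss : StronglyStable A B K κ γ)
    (x : ℕ → Fin dx → ℝ) (w : ℕ → Fin dx → ℝ)
    (hw : ∀ t, enorm' (w t) ≤ 1)
    (hdyn : ∀ t, 1 ≤ t → x (t + 1) = (A + B * K).mulVec (x t) + w t)
    (T₂ : ℕ)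
    (hlog : 0 ≤ Real.log (γ * enorm' (x 1)))
    (hT₂ : Real.log (γ * enorm' (x 1)) / γ ≤ (T₂ : ℝ)) :
    enorm' (x (T₂ + 1)) ≤ 2 * κ / γ := by
  obtain ⟨hK, H, L, hH, hconj, hHH, hL⟩ := hss
  set M := A + B * K with hM
  -- norm of powers of M
  have hLnn : 0 ≤ 1 - γ := by linarith
  have hHinv : H⁻¹ = ↑hH.unit⁻¹ := by
    calc H⁻¹ = Ring.inverse H := Matrix.nonsing_inv_eq_ringInverse H
      _ = Ring.inverse (↑hH.unit : Matrix (Fin dx) (Fin dx) ℝ) := by rw [hH.unit_spec]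
      _ = ↑hH.unit⁻¹ := Ring.inverse_unit hH.unit
  have hpow : ∀ n : ℕ, ∀ v : Fin dx → ℝ,
      enorm' ((M ^ n).mulVec v) ≤ κ * (1 - γ) ^ n * enorm' v := by
    intro n v
    rcases Nat.eq_zero_or_pos n with rfl | hn
    · simp only [pow_zero, Matrix.one_mulVec, one_mul]
      nlinarith [enorm'_nonneg v]
    · have hMn : M ^ n = H * L ^ n * H⁻¹ := by
        have h := Units.conj_pow hH.unit L n
        rw [hH.unit_spec] at h
        rw [hconj, hHinv]
        exact h
      have h1 : ‖M ^ n‖ ≤ ‖H‖ * ‖L ^ n‖ * ‖H⁻¹‖ := by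
        rw [hMn]
        calc ‖H * L ^ n * H⁻¹‖ ≤ ‖H * L ^ n‖ * ‖H⁻¹‖ := Matrix.l2_opNorm_mul _ _
          _ ≤ ‖H‖ * ‖L ^ n‖ * ‖H⁻¹‖ := by
              exact mul_le_mul_of_nonneg_right (Matrix.l2_opNorm_mul _ _) (norm_nonneg _)
      have h2 : ‖L ^ n‖ ≤ (1 - γ) ^ n :=
        (norm_pow_le' L hn).trans (pow_le_pow_left₀ (norm_nonneg _) hL n)
      have h3 : ‖M ^ n‖ ≤ κ * (1 - γ) ^ n := by
        calc ‖M ^ n‖ ≤ ‖H‖ * ‖L ^ n‖ * ‖H⁻¹‖ := h1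
          _ = ‖H‖ * ‖H⁻¹‖ * ‖L ^ n‖ := by ring
          _ ≤ κ * (1 - γ) ^ n := by
              have := mul_le_mul hHH h2 (norm_nonneg _)
                (le_trans zero_le_one hκ)
              exact this
      calc enorm' ((M ^ n).mulVec v) ≤ ‖M ^ n‖ * enorm' v := enorm'_mulVec_le _ _
        _ ≤ κ * (1 - γ) ^ n * enorm' v :=
            mul_le_mul_of_nonneg_right h3 (enorm'_nonneg v)
  -- closed form
  have hform : ∀ n : ℕ, x (n + 1) =
      (M ^ n).mulVec (x 1) + ∑ i ∈ Finset.range n, (M ^ i).mulVec (w (n - i)) := by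
    intro n
    induction n with
    | zero => simp [Matrix.one_mulVec]
    | succ n ih =>
      rw [hdyn (n + 1) (by omega), ih, Matrix.mulVec_add, Matrix.mulVec_mulVec,
        ← pow_succ']
      have hsum : M.mulVec (∑ i ∈ Finset.range n, (M ^ i).mulVec (w (n - i)))
          = ∑ i ∈ Finset.range n, (M ^ (i + 1)).mulVec (w (n - i)) := by
        rw [show M.mulVec (∑ i ∈ Finset.range n, (M ^ i).mulVec (w (n - i)))
            = M.mulVecLin (∑ i ∈ Finset.range n, (M ^ i).mulVec (w (n - i))) from rfl,
          map_sum]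
        refine Finset.sum_congr rfl fun i _ => ?_
        simp [Matrix.mulVecLin_apply, Matrix.mulVec_mulVec, ← pow_succ']
      rw [hsum]
      rw [Finset.sum_range_succ' (fun i => (M ^ i).mulVec (w (n + 1 - i))) n]
      simp only [pow_zero, Matrix.one_mulVec, Nat.sub_zero, Nat.succ_sub_succ]
      abel
  -- geometric sum bound
  have hgeom : ∀ n : ℕ, ∑ i ∈ Finset.range n, (1 - γ) ^ i ≤ 1 / γ := by
    intro n
    have hne : (1 : ℝ) - γ ≠ 1 := by linarith
    rw [geom_sum_eq hne]
    have heq : ((1 - γ) ^ n - 1) / (1 - γ - 1) = (1 - (1 - γ) ^ n) / γ := by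
      rw [show (1:ℝ) - γ - 1 = -γ by ring]
      rw [div_neg, ← neg_div, neg_sub]
    rw [heq]
    gcongr
    nlinarith [pow_nonneg hLnn n]
  -- main bound
  set X := enorm' (x 1) with hX
  have hXnn : 0 ≤ X := enorm'_nonneg _
  have hbound : enorm' (x (T₂ + 1)) ≤ κ * (1 - γ) ^ T₂ * X + κ / γ := by
    rw [hform T₂]
    calc enorm' ((M ^ T₂).mulVec (x 1) +
          ∑ i ∈ Finset.range T₂, (M ^ i).mulVec (w (T₂ - i)))
        ≤ enorm' ((M ^ T₂).mulVec (x 1)) +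
          enorm' (∑ i ∈ Finset.range T₂, (M ^ i).mulVec (w (T₂ - i))) :=
          enorm'_add_le _ _
      _ ≤ κ * (1 - γ) ^ T₂ * X +
          ∑ i ∈ Finset.range T₂, enorm' ((M ^ i).mulVec (w (T₂ - i))) := by
          exact add_le_add (hpow T₂ (x 1)) (enorm'_sum_le _ _)
      _ ≤ κ * (1 - γ) ^ T₂ * X + ∑ i ∈ Finset.range T₂, κ * (1 - γ) ^ i := by
          refine add_le_add_right (Finset.sum_le_sum fun i _ => ?_) _
          calc enorm' ((M ^ i).mulVec (w (T₂ - i)))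
              ≤ κ * (1 - γ) ^ i * enorm' (w (T₂ - i)) := hpow i _
            _ ≤ κ * (1 - γ) ^ i * 1 := by
                refine mul_le_mul_of_nonneg_left (hw _) ?_
                positivity
            _ = κ * (1 - γ) ^ i := mul_one _
      _ ≤ κ * (1 - γ) ^ T₂ * X + κ / γ := by
          rw [← Finset.mul_sum]
          refine add_le_add_right ?_ _
          calc κ * ∑ i ∈ Finset.range T₂, (1 - γ) ^ i ≤ κ * (1 / γ) :=
              mul_le_mul_of_nonneg_left (hgeom T₂) (by linarith)
            _ = κ / γ := by ring
  -- the transient term is at most κ / γ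
  have htrans : κ * (1 - γ) ^ T₂ * X ≤ κ / γ := by
    rcases eq_or_lt_of_le hXnn with h0 | hXpos
    · rw [← h0, mul_zero]
      positivity
    · have hγX : 0 < γ * X := mul_pos hγ0 hXpos
      have h1 : (1 - γ : ℝ) ≤ Real.exp (-γ) := by
        have := Real.add_one_le_exp (-γ)
        linarith
      have h2 : (1 - γ) ^ T₂ ≤ Real.exp (-γ * T₂) := by
        calc (1 - γ) ^ T₂ ≤ Real.exp (-γ) ^ T₂ := pow_le_pow_left₀ hLnn h1 T₂
          _ = Real.exp (-γ * T₂) := by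
              rw [← Real.exp_nat_mul]; ring_nf
      have h3 : Real.log (γ * X) ≤ γ * T₂ := by
        rw [div_le_iff₀ hγ0] at hT₂
        linarith
      have h4 : Real.exp (-γ * ↑T₂) ≤ 1 / (γ * X) := by
        rw [← Real.exp_log hγX, one_div, ← Real.exp_neg]
        exact Real.exp_le_exp.mpr (by linarith)
      calc κ * (1 - γ) ^ T₂ * X ≤ κ * (1 / (γ * X)) * X := by
            refine mul_le_mul_of_nonneg_right ?_ hXnn
            exact mul_le_mul_of_nonneg_left (h2.trans h4) (by linarith)
        _ = κ / γ := by field_simp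
  calc enorm' (x (T₂ + 1)) ≤ κ * (1 - γ) ^ T₂ * X + κ / γ := hbound
    _ ≤ κ / γ + κ / γ := add_le_add_left htrans _
    _ = 2 * κ / γ := by ring
end

section
/- Suppose (A, B) is (k, κ)-strongly controllable and ‖A‖, ‖B‖ ≤ β. Then for any linear controller K with ‖K‖ ≤ κ′, the system (A + BK, B) is (k, 4κ′²k²β^{2k}κ)-strongly controllable. -/
open scoped Matrix.Norms.L2Operator
open scoped Matrix

/-- The controllability matrix `C_k = [B, AB, A²B, …, A^{k-1}B]`. -/
noncomputable def ctrb {dx du : ℕ} (k : ℕ) (A : Matrix (Fin dx) (Fin dx) ℝ)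
    (B : Matrix (Fin dx) (Fin du) ℝ) : Matrix (Fin dx) (Fin k × Fin du) ℝ :=
  fun i p => (A ^ (p.1 : ℕ) * B) i p.2

/-- `(A, B)` is `(k, κ)`-strongly controllable. -/
noncomputable def StronglyControllable {dx du : ℕ} (A : Matrix (Fin dx) (Fin dx) ℝ)
    (B : Matrix (Fin dx) (Fin du) ℝ) (k : ℕ) (κ : ℝ) : Prop :=
  (ctrb k A B).rank = dx ∧ ‖(ctrb k A B * (ctrb k A B)ᵀ)⁻¹‖ ≤ κ

/-! ### Auxiliary analytic lemmas -/

section helpers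
variable {m n : Type*} [Fintype m] [Fintype n] [DecidableEq m] [DecidableEq n]

lemma sc5_norm_eq (g : n → ℝ) :
    ‖(WithLp.equiv 2 (n → ℝ)).symm g‖ = Real.sqrt (∑ a, g a ^ 2) := by
  rw [EuclideanSpace.norm_eq]; simp [Real.norm_eq_abs, sq_abs]

lemma sc5_opNorm_le (A : Matrix m n ℝ) {c : ℝ} (hc : 0 ≤ c)
    (h : ∀ x : n → ℝ, Real.sqrt (∑ a, (A *ᵥ x) a ^ 2) ≤ c * Real.sqrt (∑ b, x b ^ 2)) :
    ‖A‖ ≤ c := by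
  rw [Matrix.l2_opNorm_def]
  apply ContinuousLinearMap.opNorm_le_bound _ hc
  intro x
  have h1 : ((Matrix.toEuclideanLin (𝕜 := ℝ) (m := m) (n := n)).trans
      LinearMap.toContinuousLinearMap A) x = (WithLp.equiv 2 (m → ℝ)).symm
      (A *ᵥ (WithLp.equiv 2 (n → ℝ) x)) := rfl
  have h3 : ‖x‖ = Real.sqrt (∑ b, (WithLp.equiv 2 (n → ℝ) x) b ^ 2) := by
    rw [EuclideanSpace.norm_eq]; simp [Real.norm_eq_abs, sq_abs]
  rw [h1, sc5_norm_eq, h3]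
  exact h _

lemma sc5_mulVec_le (A : Matrix m n ℝ) (w : n → ℝ) :
    Real.sqrt (∑ a, (A *ᵥ w) a ^ 2) ≤ ‖A‖ * Real.sqrt (∑ b, w b ^ 2) := by
  have := Matrix.l2_opNorm_mulVec A ((WithLp.equiv 2 (n → ℝ)).symm w)
  have h4 : ‖(EuclideanSpace.equiv m ℝ).symm (A *ᵥ ((WithLp.equiv 2 (n → ℝ)).symm w))‖
      = Real.sqrt (∑ a, (A *ᵥ w) a ^ 2) := sc5_norm_eq _
  rw [sc5_norm_eq, h4] at this
  exact this

lemma sc5_sqrt_sum_sum_le {ι : Type*} [Fintype ι] (f : ι → n → ℝ) :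
    Real.sqrt (∑ a, (∑ j, f j a) ^ 2) ≤ ∑ j, Real.sqrt (∑ a, f j a ^ 2) := by
  have key : (WithLp.equiv 2 (n → ℝ)).symm (fun a => ∑ j, f j a)
      = ∑ j, (WithLp.equiv 2 (n → ℝ)).symm (f j) := by
    have := map_sum ((WithLp.linearEquiv 2 ℝ (n → ℝ)).symm) f Finset.univ
    simpa [Finset.sum_fn] using this
  calc Real.sqrt (∑ a, (∑ j, f j a) ^ 2)
      = ‖(WithLp.equiv 2 (n → ℝ)).symm (fun a => ∑ j, f j a)‖ := (sc5_norm_eq _).symm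
    _ = ‖∑ j, (WithLp.equiv 2 (n → ℝ)).symm (f j)‖ := by rw [key]
    _ ≤ ∑ j, ‖(WithLp.equiv 2 (n → ℝ)).symm (f j)‖ := norm_sum_le _ _
    _ = ∑ j, Real.sqrt (∑ a, f j a ^ 2) := by simp_rw [sc5_norm_eq]

lemma sc5_idem_norm_le (P : Matrix n n ℝ)
    (h1 : P * P = P) (h2 : Pᵀ = P) : ‖P‖ ≤ 1 := by
  have hC : ‖P‖ * ‖P‖ = ‖P‖ := by
    have h := Matrix.l2_opNorm_conjTranspose_mul_self P
    rw [Matrix.conjTranspose_eq_transpose_of_trivial, h2, h1] at h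
    exact h.symm
  nlinarith [norm_nonneg P]

lemma sc5_pow_norm_le (A : Matrix n n ℝ) {β : ℝ} (hβ : 1 ≤ β) (hA : ‖A‖ ≤ β) (m : ℕ) :
    ‖A ^ m‖ ≤ β ^ m := by
  induction m with
  | zero =>
    simpa using sc5_idem_norm_le (1 : Matrix n n ℝ) (one_mul 1) Matrix.transpose_one
  | succ m ih =>
    rw [pow_succ, pow_succ]
    calc ‖A ^ m * A‖ ≤ ‖A ^ m‖ * ‖A‖ := Matrix.l2_opNorm_mul _ _
      _ ≤ β ^ m * β := mul_le_mul ih hA (norm_nonneg _) (by positivity)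

end helpers

/-- Block-matrix norm bound via the Frobenius norm of the matrix of block norms. -/
lemma sc5_block_norm_le {k du : ℕ} (T : Matrix (Fin k × Fin du) (Fin k × Fin du) ℝ)
    (Mb : Fin k → Fin k → Matrix (Fin du) (Fin du) ℝ) (N : Fin k → Fin k → ℝ)
    (hT : ∀ i j a b, T (i, a) (j, b) = Mb i j a b)
    (hN : ∀ i j, ‖Mb i j‖ ≤ N i j) :
    ‖T‖ ≤ Real.sqrt (∑ i, ∑ j, N i j ^ 2) := by
  apply sc5_opNorm_le _ (Real.sqrt_nonneg _)
  intro x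
  set xb : Fin k → Fin du → ℝ := fun j b => x (j, b) with hxb
  have hv : ∀ i a, (T *ᵥ x) (i, a) = ∑ j, (Mb i j *ᵥ xb j) a := by
    intro i a
    simp only [Matrix.mulVec, dotProduct, Fintype.sum_prod_type]
    exact Finset.sum_congr rfl fun j _ => Finset.sum_congr rfl fun b _ => by rw [hT]
  have hrow : ∀ i, Real.sqrt (∑ a, (T *ᵥ x) (i, a) ^ 2)
      ≤ ∑ j, N i j * Real.sqrt (∑ b, xb j b ^ 2) := by
    intro i
    have h1 : (∑ a, (T *ᵥ x) (i, a) ^ 2) = ∑ a, (∑ j, (Mb i j *ᵥ xb j) a) ^ 2 :=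
      Finset.sum_congr rfl fun a _ => by rw [hv]
    rw [h1]
    refine (sc5_sqrt_sum_sum_le _).trans (Finset.sum_le_sum fun j _ => ?_)
    exact (sc5_mulVec_le _ _).trans
      (mul_le_mul_of_nonneg_right (hN i j) (Real.sqrt_nonneg _))
  have total : ∑ p : Fin k × Fin du, (T *ᵥ x) p ^ 2
      ≤ (∑ i, ∑ j, N i j ^ 2) * (∑ b : Fin k × Fin du, x b ^ 2) := by
    rw [Fintype.sum_prod_type, Finset.sum_mul]
    apply Finset.sum_le_sum
    intro i _
    have e1 : (∑ a, (T *ᵥ x) (i, a) ^ 2)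
        = Real.sqrt (∑ a, (T *ᵥ x) (i, a) ^ 2) ^ 2 := by
      rw [Real.sq_sqrt (by positivity)]
    rw [e1]
    have h2 := pow_le_pow_left₀ (Real.sqrt_nonneg _) (hrow i) 2
    refine h2.trans ?_
    have cs := Finset.sum_mul_sq_le_sq_mul_sq Finset.univ (fun j => N i j)
      (fun j => Real.sqrt (∑ b, xb j b ^ 2))
    refine cs.trans ?_
    apply mul_le_mul_of_nonneg_left _ (by positivity)
    apply le_of_eq
    rw [Fintype.sum_prod_type]
    exact Finset.sum_congr rfl fun j _ => by rw [Real.sq_sqrt (by positivity)]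
  calc Real.sqrt (∑ p, (T *ᵥ x) p ^ 2)
      ≤ Real.sqrt ((∑ i, ∑ j, N i j ^ 2) * (∑ b, x b ^ 2)) := Real.sqrt_le_sqrt total
    _ = Real.sqrt (∑ i, ∑ j, N i j ^ 2) * Real.sqrt (∑ b, x b ^ 2) :=
        Real.sqrt_mul (by positivity) _

/-! ### The transfer matrix factorization -/

noncomputable def sc5coef {dx du : ℕ} (A : Matrix (Fin dx) (Fin dx) ℝ)
    (B : Matrix (Fin dx) (Fin du) ℝ) (K : Matrix (Fin du) (Fin dx) ℝ) (i j : ℕ) :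
    Matrix (Fin du) (Fin du) ℝ :=
  if i = j then 1 else if i < j then K * (A + B * K) ^ (j - i - 1) * B else 0

lemma sc5coef_succ {dx du : ℕ} (A : Matrix (Fin dx) (Fin dx) ℝ)
    (B : Matrix (Fin dx) (Fin du) ℝ) (K : Matrix (Fin du) (Fin dx) ℝ) (i j : ℕ) :
    sc5coef A B K (i + 1) (j + 1) = sc5coef A B K i j := by
  unfold sc5coef
  simp only [Nat.add_right_cancel_iff, Nat.add_lt_add_iff_right, Nat.succ_sub_succ]

lemma sc5pow {dx du : ℕ} (A : Matrix (Fin dx) (Fin dx) ℝ)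
    (B : Matrix (Fin dx) (Fin du) ℝ) (K : Matrix (Fin du) (Fin dx) ℝ) (j : ℕ) :
    (A + B * K) ^ j * B = ∑ i ∈ Finset.range (j + 1), A ^ i * B * sc5coef A B K i j := by
  induction j with
  | zero => simp [sc5coef]
  | succ j ih =>
    rw [pow_succ', Matrix.mul_assoc, ih, Matrix.mul_sum]
    rw [Finset.sum_range_succ' (fun i => A ^ i * B * sc5coef A B K i (j + 1))]
    have h0 : A ^ 0 * B * sc5coef A B K 0 (j + 1) = B * K * ((A + B * K) ^ j * B) := by
      unfold sc5coef
      rw [if_neg (by omega : ¬ (0 = j + 1)), if_pos (Nat.zero_lt_succ j)]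
      simp only [Nat.sub_zero, Nat.succ_sub_one, pow_zero, Matrix.one_mul,
        Matrix.mul_assoc]
    rw [h0, ih, Matrix.mul_sum]
    rw [← Finset.sum_add_distrib]
    apply Finset.sum_congr rfl
    intro i _
    rw [sc5coef_succ]
    have : (A + B * K) * (A ^ i * B * sc5coef A B K i j)
        = A ^ (i + 1) * B * sc5coef A B K i j + B * K * (A ^ i * B * sc5coef A B K i j) := by
      simp only [Matrix.add_mul, pow_succ', Matrix.mul_assoc]
    rw [this]

noncomputable def sc5T {dx du : ℕ} (k : ℕ) (A : Matrix (Fin dx) (Fin dx) ℝ)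
    (B : Matrix (Fin dx) (Fin du) ℝ) (K : Matrix (Fin du) (Fin dx) ℝ) :
    Matrix (Fin k × Fin du) (Fin k × Fin du) ℝ :=
  fun p q => sc5coef A B K (p.1 : ℕ) (q.1 : ℕ) p.2 q.2

lemma sc5ctrb {dx du : ℕ} (k : ℕ) (A : Matrix (Fin dx) (Fin dx) ℝ)
    (B : Matrix (Fin dx) (Fin du) ℝ) (K : Matrix (Fin du) (Fin dx) ℝ) :
    ctrb k (A + B * K) B = ctrb k A B * sc5T k A B K := by
  funext x q
  obtain ⟨j, b⟩ := q
  have hmul : (ctrb k A B * sc5T k A B K) x (j, b)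
      = ∑ i : Fin k, (A ^ (i : ℕ) * B * sc5coef A B K (i : ℕ) (j : ℕ)) x b := by
    rw [Matrix.mul_apply]
    rw [Fintype.sum_prod_type]
    apply Finset.sum_congr rfl
    intro i _
    rw [Matrix.mul_apply]
    apply Finset.sum_congr rfl
    intro a _
    rfl
  rw [hmul]
  have hsum : ∑ i : Fin k, (A ^ (i : ℕ) * B * sc5coef A B K (i : ℕ) (j : ℕ)) x b
      = ∑ i ∈ Finset.range ((j : ℕ) + 1), (A ^ i * B * sc5coef A B K i (j : ℕ)) x b := by
    rw [Fin.sum_univ_eq_sum_range (fun i => (A ^ i * B * sc5coef A B K i (j : ℕ)) x b) k]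
    symm
    apply Finset.sum_subset
    · intro i hi
      simp only [Finset.mem_range] at *
      omega
    · intro i _ hi
      simp only [Finset.mem_range, not_lt] at hi
      have h1 : sc5coef A B K i (j : ℕ) = 0 := by
        unfold sc5coef
        rw [if_neg (by omega), if_neg (by omega)]
      rw [h1, Matrix.mul_zero]
      simp
  rw [hsum, ← Matrix.sum_apply, ← sc5pow]
  rfl

lemma sc5_isUnit_of_rank {n : ℕ} (M : Matrix (Fin n) (Fin n) ℝ) (h : M.rank = n) :
    IsUnit M := by
  rw [← Matrix.mulVec_surjective_iff_isUnit]
  have ht : LinearMap.range M.mulVecLin = ⊤ := by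
    apply Submodule.eq_top_of_finrank_eq
    rw [← Matrix.rank, h]
    simp [Module.finrank_pi]
  intro y
  exact LinearMap.range_eq_top.mp ht y

set_option maxHeartbeats 1000000 in
theorem stmt5 {dx du : ℕ} (A : Matrix (Fin dx) (Fin dx) ℝ)
    (B : Matrix (Fin dx) (Fin du) ℝ) (K : Matrix (Fin du) (Fin dx) ℝ)
    (k : ℕ) (κ κ' β : ℝ) (hβ : 1 ≤ β) (hκ' : 1 ≤ κ')
    (hsc : StronglyControllable A B k κ)
    (hA : ‖A‖ ≤ β) (hB : ‖B‖ ≤ β) (hK : ‖K‖ ≤ κ') :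
    StronglyControllable (A + B * K) B k (4 * κ' ^ 2 * (k : ℝ) ^ 2 * β ^ (2 * k) * κ) := by
  obtain ⟨hrank, hMinv⟩ := hsc
  have hκ'0 : (0 : ℝ) ≤ κ' := le_trans zero_le_one hκ'
  have hβ0 : (0 : ℝ) ≤ β := le_trans zero_le_one hβ
  have hκ0 : (0 : ℝ) ≤ κ := le_trans (norm_nonneg _) hMinv
  set C : Matrix (Fin dx) (Fin k × Fin du) ℝ := ctrb k A B with hCdef
  set C' : Matrix (Fin dx) (Fin k × Fin du) ℝ := ctrb k (A + B * K) B with hC'def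
  set T' : Matrix (Fin k × Fin du) (Fin k × Fin du) ℝ := sc5T k (A + B * K) B (-K) with hT'def
  have hAe : A + B * K + B * -K = A := by rw [Matrix.mul_neg]; abel
  have hfac2 : C = C' * T' := by
    have h := sc5ctrb k (A + B * K) B (-K)
    rw [hAe] at h
    exact h
  set G := C * Cᵀ with hGdef
  set G' := C' * C'ᵀ with hG'def
  -- ranks
  have hrank' : C'.rank = dx := by
    apply le_antisymm
    · simpa using C'.rank_le_card_height
    · calc dx = C.rank := hrank.symm
        _ = (C' * T').rank := by rw [← hfac2]
        _ ≤ C'.rank := Matrix.rank_mul_le_left _ _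
  have hGrank : G.rank = dx := by rw [hGdef, Matrix.rank_self_mul_transpose]; exact hrank
  have hG'rank : G'.rank = dx := by rw [hG'def, Matrix.rank_self_mul_transpose]; exact hrank'
  have hGdet : IsUnit G.det :=
    (Matrix.isUnit_iff_isUnit_det _).mp (sc5_isUnit_of_rank _ (by simpa using hGrank))
  have hG'det : IsUnit G'.det :=
    (Matrix.isUnit_iff_isUnit_det _).mp (sc5_isUnit_of_rank _ (by simpa using hG'rank))
  -- symmetry
  have hGsym : Gᵀ = G := by rw [hGdef, Matrix.transpose_mul, Matrix.transpose_transpose]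
  have hG'sym : G'ᵀ = G' := by rw [hG'def, Matrix.transpose_mul, Matrix.transpose_transpose]
  have hGinvsym : G⁻¹ᵀ = G⁻¹ := by rw [Matrix.transpose_nonsing_inv, hGsym]
  have hG'invsym : G'⁻¹ᵀ = G'⁻¹ := by rw [Matrix.transpose_nonsing_inv, hG'sym]
  -- the orthogonal projection onto the row space of C'
  set P := C'ᵀ * G'⁻¹ * C' with hPdef
  have hPP : P * P = P := by
    rw [hPdef]
    calc C'ᵀ * G'⁻¹ * C' * (C'ᵀ * G'⁻¹ * C')
        = C'ᵀ * G'⁻¹ * (C' * C'ᵀ) * (G'⁻¹ * C') := by simp only [Matrix.mul_assoc]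
      _ = C'ᵀ * (G'⁻¹ * G') * (G'⁻¹ * C') := by
          rw [← hG'def, Matrix.mul_assoc C'ᵀ]
      _ = C'ᵀ * (G'⁻¹ * C') := by
          rw [Matrix.nonsing_inv_mul _ hG'det, Matrix.mul_one]
      _ = C'ᵀ * G'⁻¹ * C' := by rw [Matrix.mul_assoc]
  have hPT : Pᵀ = P := by
    rw [hPdef, Matrix.transpose_mul, Matrix.transpose_mul, Matrix.transpose_transpose,
      hG'invsym, ← Matrix.mul_assoc]
  have hPnorm : ‖P‖ ≤ 1 := sc5_idem_norm_le P hPP hPT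
  -- E = Cᵀ G⁻¹ and F = C'ᵀ G'⁻¹
  set E := Cᵀ * G⁻¹ with hEdef
  set F := C'ᵀ * G'⁻¹ with hFdef
  have hEE : Eᵀ * E = G⁻¹ := by
    rw [hEdef, Matrix.transpose_mul, Matrix.transpose_transpose, hGinvsym]
    calc G⁻¹ * C * (Cᵀ * G⁻¹) = G⁻¹ * (C * Cᵀ * G⁻¹) := by simp only [Matrix.mul_assoc]
      _ = G⁻¹ * (G * G⁻¹) := by rw [← hGdef]
      _ = G⁻¹ := by rw [Matrix.mul_nonsing_inv _ hGdet, Matrix.mul_one]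
  have hFF : Fᵀ * F = G'⁻¹ := by
    rw [hFdef, Matrix.transpose_mul, Matrix.transpose_transpose, hG'invsym]
    calc G'⁻¹ * C' * (C'ᵀ * G'⁻¹) = G'⁻¹ * (C' * C'ᵀ * G'⁻¹) := by
          simp only [Matrix.mul_assoc]
      _ = G'⁻¹ * (G' * G'⁻¹) := by rw [← hG'def]
      _ = G'⁻¹ := by rw [Matrix.mul_nonsing_inv _ hG'det, Matrix.mul_one]
  have hEnorm2 : ‖E‖ * ‖E‖ ≤ κ := by
    have h := Matrix.l2_opNorm_conjTranspose_mul_self E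
    rw [Matrix.conjTranspose_eq_transpose_of_trivial, hEE] at h
    rw [← h]
    exact hMinv
  have hG'norm : ‖G'⁻¹‖ = ‖F‖ * ‖F‖ := by
    have h := Matrix.l2_opNorm_conjTranspose_mul_self F
    rw [Matrix.conjTranspose_eq_transpose_of_trivial, hFF] at h
    exact h
  -- the key factorization F = P * (T' * E)
  have hFfac : F = P * (T' * E) := by
    symm
    rw [hPdef, hEdef, hFdef]
    calc C'ᵀ * G'⁻¹ * C' * (T' * (Cᵀ * G⁻¹))
        = C'ᵀ * (G'⁻¹ * (C' * T' * (Cᵀ * G⁻¹))) := by simp only [Matrix.mul_assoc]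
      _ = C'ᵀ * (G'⁻¹ * (C * Cᵀ * G⁻¹)) := by rw [← hfac2, Matrix.mul_assoc]
      _ = C'ᵀ * (G'⁻¹ * (G * G⁻¹)) := by rw [← hGdef]
      _ = C'ᵀ * G'⁻¹ := by rw [Matrix.mul_nonsing_inv _ hGdet, Matrix.mul_one]
  -- norm bound on T'
  set c : ℝ := κ' * β ^ (k - 1) with hcdef
  have hbpow : (1 : ℝ) ≤ β ^ (k - 1) := by simpa using pow_le_pow_left₀ zero_le_one hβ (k - 1)
  have hc1 : 1 ≤ c := by nlinarith
  have hc0 : 0 ≤ c := le_trans zero_le_one hc1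
  have hblock : ∀ i j : Fin k,
      ‖sc5coef (A + B * K) B (-K) (i : ℕ) (j : ℕ)‖ ≤ c := by
    intro i j
    unfold sc5coef
    split_ifs with h1 h2
    · exact le_trans (sc5_idem_norm_le 1 (one_mul 1) Matrix.transpose_one) hc1
    · rw [hAe]
      set m : ℕ := (j : ℕ) - i - 1 with hm
      have hm1 : m + 1 ≤ k - 1 := by
        have hj := j.isLt
        omega
      have hstep : ‖-K * A ^ m * B‖ ≤ ‖K‖ * ‖A ^ m‖ * ‖B‖ := by
        calc ‖-K * A ^ m * B‖ ≤ ‖-K * A ^ m‖ * ‖B‖ := Matrix.l2_opNorm_mul _ _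
          _ ≤ ‖-K‖ * ‖A ^ m‖ * ‖B‖ :=
            mul_le_mul_of_nonneg_right (Matrix.l2_opNorm_mul _ _) (norm_nonneg _)
          _ = ‖K‖ * ‖A ^ m‖ * ‖B‖ := by rw [norm_neg]
      refine hstep.trans ?_
      have hApow := sc5_pow_norm_le A hβ hA m
      calc ‖K‖ * ‖A ^ m‖ * ‖B‖ ≤ κ' * β ^ m * β := by
            apply mul_le_mul _ hB (norm_nonneg _) (by positivity)
            exact mul_le_mul hK hApow (norm_nonneg _) hκ'0
        _ = κ' * β ^ (m + 1) := by rw [pow_succ, mul_assoc]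
        _ ≤ κ' * β ^ (k - 1) :=
            mul_le_mul_of_nonneg_left (pow_le_pow_right₀ hβ hm1) hκ'0
    · simp only [norm_zero]
      exact hc0
  have hT'norm : ‖T'‖ ≤ (k : ℝ) * c := by
    have h := sc5_block_norm_le T'
      (fun i j => sc5coef (A + B * K) B (-K) (i : ℕ) (j : ℕ))
      (fun _ _ => c) (fun i j a b => rfl) hblock
    have e : (∑ _i : Fin k, ∑ _j : Fin k, c ^ 2) = ((k : ℝ) * c) ^ 2 := by
      simp [Finset.sum_const]
      ring
    rw [e, Real.sqrt_sq (by positivity)] at h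
    exact h
  -- conclusion
  constructor
  · exact hrank'
  · show ‖G'⁻¹‖ ≤ _
    have hF2 : ‖F‖ ≤ ((k : ℝ) * c) * ‖E‖ := by
      rw [hFfac]
      calc ‖P * (T' * E)‖ ≤ ‖P‖ * ‖T' * E‖ := Matrix.l2_opNorm_mul _ _
        _ ≤ 1 * ‖T' * E‖ := mul_le_mul_of_nonneg_right hPnorm (norm_nonneg _)
        _ = ‖T' * E‖ := one_mul _
        _ ≤ ‖T'‖ * ‖E‖ := Matrix.l2_opNorm_mul _ _
        _ ≤ ((k : ℝ) * c) * ‖E‖ :=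
            mul_le_mul_of_nonneg_right hT'norm (norm_nonneg _)
    calc ‖G'⁻¹‖ = ‖F‖ * ‖F‖ := hG'norm
      _ ≤ (((k : ℝ) * c) * ‖E‖) * (((k : ℝ) * c) * ‖E‖) :=
          mul_le_mul hF2 hF2 (norm_nonneg _) (by positivity)
      _ = ((k : ℝ) * c) ^ 2 * (‖E‖ * ‖E‖) := by ring
      _ ≤ ((k : ℝ) * c) ^ 2 * κ := mul_le_mul_of_nonneg_left hEnorm2 (by positivity)
      _ ≤ 4 * κ' ^ 2 * (k : ℝ) ^ 2 * β ^ (2 * k) * κ := by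
          apply mul_le_mul_of_nonneg_right _ hκ0
          have hp : β ^ ((k - 1) * 2) ≤ β ^ (2 * k) := pow_le_pow_right₀ hβ (by omega)
          have e2 : ((k : ℝ) * c) ^ 2 = κ' ^ 2 * (k : ℝ) ^ 2 * β ^ ((k - 1) * 2) := by
            rw [hcdef, mul_pow, mul_pow, ← pow_mul]
            ring
          rw [e2]
          have h1 := mul_le_mul_of_nonneg_left hp
            (show (0 : ℝ) ≤ κ' ^ 2 * (k : ℝ) ^ 2 by positivity)
          have h2 : (0 : ℝ) ≤ κ' ^ 2 * (k : ℝ) ^ 2 * β ^ (2 * k) := by positivity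
          linarith
end

section
/- In Algorithm AdvSysId with parameters satisfying ‖A‖, ‖B‖ ≤ λ/4 − 1, ‖w_t‖ ≤ 1, ‖x_1‖ ≤ 1, λ ≥ 1, ε₀ < 1, and with nonzero scaled controls u_t = λ^{t−1} ε₀^{−i} e_i applied at times t ≡ 1 (mod k+1) (with i = (t−1)/(k+1) + 1) and u_t = 0 otherwise, the state at every time t = (i−1)(k+1)+j+2 with 0 ≤ j ≤ k satisfies ‖x_t‖ ≤ λ^{t−1} ε₀^{−i}. -/
open scoped Matrix.Norms.L2Operator

/-- The Euclidean (ℓ²) norm of a vector. -/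
noncomputable def euclidNorm {n : ℕ} (v : Fin n → ℝ) : ℝ := Real.sqrt (∑ i, v i ^ 2)

lemma euclidNorm_eq {n : ℕ} (v : Fin n → ℝ) : euclidNorm v = ‖(EuclideanSpace.equiv (Fin n) ℝ).symm v‖ := by
  rw [EuclideanSpace.norm_eq, euclidNorm]
  congr 1
  exact Finset.sum_congr rfl fun i _ => by simp [Real.norm_eq_abs, sq_abs]

lemma euclidNorm_add_le {n : ℕ} (a b : Fin n → ℝ) : euclidNorm (a + b) ≤ euclidNorm a + euclidNorm b := by
  simp only [euclidNorm_eq]; exact norm_add_le _ _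

lemma euclidNorm_mulVec_le {m n : ℕ} (A : Matrix (Fin m) (Fin n) ℝ) (v : Fin n → ℝ) :
    euclidNorm (A.mulVec v) ≤ ‖A‖ * euclidNorm v := by
  simp only [euclidNorm_eq]
  exact A.l2_opNorm_mulVec ((EuclideanSpace.equiv (Fin n) ℝ).symm v)

lemma euclidNorm_single {n : ℕ} (i : Fin n) (c : ℝ) (hc : 0 ≤ c) :
    euclidNorm (fun l => if l = i then c else 0) = c := by
  unfold euclidNorm
  rw [Finset.sum_eq_single i (fun b _ hb => by simp [hb]) (fun h => absurd (Finset.mem_univ i) h)]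
  simp [Real.sqrt_sq hc]


/-- State bound during the `AdvSysId` exploration phase.  Indices are 0-based:
`i : Fin du` plays the role of the paper's `i - 1`, so the nonzero control
`ξ_i e_i` with `ξ_i = λ^{t-1} ε₀^{-i}` is injected at time `t = i(k+1) + 1`,
and the claimed bound is `‖x_t‖ ≤ λ^{t-1} ε₀^{-i}` at `t = i(k+1) + j + 2`. -/
theorem stmt7 {dx du : ℕ} (k : ℕ) (A : Matrix (Fin dx) (Fin dx) ℝ)
    (B : Matrix (Fin dx) (Fin du) ℝ) (lam ε₀ : ℝ)
    (hlam : 1 ≤ lam) (hε₀ : 0 < ε₀) (hε₀1 : ε₀ < 1)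
    (hA : ‖A‖ ≤ lam / 4 - 1) (hB : ‖B‖ ≤ lam / 4 - 1)
    (x w : ℕ → Fin dx → ℝ) (u : ℕ → Fin du → ℝ) (hx1 : euclidNorm (x 1) ≤ 1)
    (hw : ∀ t : ℕ, euclidNorm (w t) ≤ 1)
    (hdyn : ∀ t : ℕ, 1 ≤ t → x (t + 1) = A.mulVec (x t) + B.mulVec (u t) + w t)
    (hu : ∀ i : Fin du,
      u ((i : ℕ) * (k + 1) + 1) =
        fun l => if l = i then lam ^ ((i : ℕ) * (k + 1)) * ε₀⁻¹ ^ ((i : ℕ) + 1) else 0)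
    (hu0 : ∀ t : ℕ, 1 ≤ t → (t - 1) % (k + 1) ≠ 0 → u t = (0 : Fin du → ℝ)) :
    ∀ i : Fin du, ∀ j : ℕ, j ≤ k →
      euclidNorm (x ((i : ℕ) * (k + 1) + j + 2)) ≤
        lam ^ ((i : ℕ) * (k + 1) + j + 1) * ε₀⁻¹ ^ ((i : ℕ) + 1) := by
  have hεinv : (1:ℝ) ≤ ε₀⁻¹ := (one_le_inv₀ hε₀).mpr (le_of_lt hε₀1)
  have hlam0 : (0:ℝ) ≤ lam := by linarith
  have step : ∀ n : ℕ, n < du →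
      euclidNorm (x (n * (k + 1) + 1)) ≤ lam ^ (n * (k + 1)) * ε₀⁻¹ ^ n →
      ∀ j : ℕ, j ≤ k →
        euclidNorm (x (n * (k + 1) + j + 2)) ≤ lam ^ (n * (k + 1) + j + 1) * ε₀⁻¹ ^ (n + 1) := by
    intro n hn hQ j hj
    induction j with
    | zero =>
      have hd := hdyn (n * (k + 1) + 1) (by omega)
      have hu' := hu ⟨n, hn⟩
      simp only [Fin.val_mk] at hu'
      have e : n * (k + 1) + 0 + 2 = (n * (k + 1) + 1) + 1 := by ring
      rw [e, hd, hu']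
      have hξ : euclidNorm (fun l => if l = (⟨n, hn⟩ : Fin du) then
          lam ^ (n * (k + 1)) * ε₀⁻¹ ^ (n + 1) else 0) =
          lam ^ (n * (k + 1)) * ε₀⁻¹ ^ (n + 1) :=
        euclidNorm_single _ _ (by positivity)
      have h1 := euclidNorm_add_le (A.mulVec (x (n * (k + 1) + 1)) +
        B.mulVec (u (n * (k + 1) + 1))) (w (n * (k + 1) + 1))
      have h2 := euclidNorm_add_le (A.mulVec (x (n * (k + 1) + 1))) (B.mulVec (u (n * (k + 1) + 1)))
      have h3 := euclidNorm_mulVec_le A (x (n * (k + 1) + 1))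
      have h4 := euclidNorm_mulVec_le B (u (n * (k + 1) + 1))
      rw [hu', hξ] at h4
      have h5 := hw (n * (k + 1) + 1)
      have hQ' : ‖A‖ * euclidNorm (x (n * (k + 1) + 1)) ≤
          ‖A‖ * (lam ^ (n * (k + 1)) * ε₀⁻¹ ^ n) :=
        mul_le_mul_of_nonneg_left hQ (norm_nonneg A)
      have hmono : lam ^ (n * (k + 1)) * ε₀⁻¹ ^ n ≤ lam ^ (n * (k + 1)) * ε₀⁻¹ ^ (n + 1) :=
        mul_le_mul_of_nonneg_left (pow_le_pow_right₀ hεinv (by omega)) (by positivity)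
      have hone : (1:ℝ) ≤ lam ^ (n * (k + 1)) * ε₀⁻¹ ^ (n + 1) :=
        one_le_mul_of_one_le_of_one_le (one_le_pow₀ hlam) (one_le_pow₀ hεinv)
      have hpow : lam ^ (n * (k + 1) + 0 + 1) = lam * lam ^ (n * (k + 1)) := by
        rw [show n * (k + 1) + 0 + 1 = n * (k + 1) + 1 by ring, pow_succ]; ring
      rw [hu'] at h1 h2
      rw [hpow]
      have hξ0 : (0:ℝ) ≤ lam ^ (n * (k + 1)) * ε₀⁻¹ ^ (n + 1) := le_trans zero_le_one hone
      nlinarith [norm_nonneg A, norm_nonneg B,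
        mul_le_mul_of_nonneg_left hmono (norm_nonneg A),
        mul_le_mul_of_nonneg_right hA hξ0,
        mul_le_mul_of_nonneg_right hB hξ0,
        mul_le_mul_of_nonneg_right (show lam / 4 - 1 + (lam / 4 - 1) + 1 ≤ lam by linarith) hξ0]
    | succ j ih =>
      have ihb := ih (by omega)
      have hd := hdyn (n * (k + 1) + j + 2) (by omega)
      have hz : u (n * (k + 1) + j + 2) = 0 := by
        apply hu0 _ (by omega)
        have e1 : n * (k + 1) + j + 2 - 1 = (j + 1) + n * (k + 1) := by
          generalize n * (k + 1) = m; omega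
        rw [e1, Nat.add_mul_mod_self_right, Nat.mod_eq_of_lt (by omega)]
        omega
      have e : n * (k + 1) + (j + 1) + 2 = (n * (k + 1) + j + 2) + 1 := by ring
      rw [e, hd, hz, Matrix.mulVec_zero]
      have h1 := euclidNorm_add_le (A.mulVec (x (n * (k + 1) + j + 2)) + 0) (w (n * (k + 1) + j + 2))
      have h2 : A.mulVec (x (n * (k + 1) + j + 2)) + 0 = A.mulVec (x (n * (k + 1) + j + 2)) := by
        simp
      rw [h2] at h1 ⊢
      have h3 := euclidNorm_mulVec_le A (x (n * (k + 1) + j + 2))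
      have h5 := hw (n * (k + 1) + j + 2)
      have hQ' : ‖A‖ * euclidNorm (x (n * (k + 1) + j + 2)) ≤
          ‖A‖ * (lam ^ (n * (k + 1) + j + 1) * ε₀⁻¹ ^ (n + 1)) :=
        mul_le_mul_of_nonneg_left ihb (norm_nonneg A)
      have hone : (1:ℝ) ≤ lam ^ (n * (k + 1) + j + 1) * ε₀⁻¹ ^ (n + 1) :=
        one_le_mul_of_one_le_of_one_le (one_le_pow₀ hlam) (one_le_pow₀ hεinv)
      have hpow : lam ^ (n * (k + 1) + (j + 1) + 1) = lam * lam ^ (n * (k + 1) + j + 1) := by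
        rw [show n * (k + 1) + (j + 1) + 1 = (n * (k + 1) + j + 1) + 1 by ring, pow_succ]; ring
      rw [hpow]
      have hξ0 : (0:ℝ) ≤ lam ^ (n * (k + 1) + j + 1) * ε₀⁻¹ ^ (n + 1) := le_trans zero_le_one hone
      nlinarith [norm_nonneg A, mul_le_mul_of_nonneg_right hA hξ0,
        mul_le_mul_of_nonneg_right (show lam / 4 - 1 + 1 ≤ lam by linarith) hξ0]
  have key : ∀ n : ℕ, n < du →
      ∀ j : ℕ, j ≤ k →
        euclidNorm (x (n * (k + 1) + j + 2)) ≤ lam ^ (n * (k + 1) + j + 1) * ε₀⁻¹ ^ (n + 1) := by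
    intro n
    induction n with
    | zero =>
      intro hn
      apply step 0 hn
      simpa using hx1
    | succ n ihn =>
      intro hn
      have prev := ihn (by omega) k le_rfl
      apply step (n + 1) hn
      have e1 : (n + 1) * (k + 1) + 1 = n * (k + 1) + k + 2 := by ring
      have e2 : (n + 1) * (k + 1) = n * (k + 1) + k + 1 := by ring
      rw [e1, e2]
      exact prev
  intro i j hj
  exact key i i.isLt j hj
end

section
/- Let A be the unique solution of X C_k = Y where C_k has full row rank with σ_min(C_k) ≥ κ^{−1/2}, and suppose ‖C₀ − C_k‖_F ≤ δ < σ_min(C_k) and ‖C₁ − Y‖_F ≤ δ. Then the least-squares solution Â = C₁C₀ᵀ(C₀C₀ᵀ)⁻¹ satisfies, for each row i, ‖A_i − Â_i‖ ≤ (δ + δ‖A_i‖)/(σ_min(C_k) − δ), and consequently ‖A − Â‖_F² = Σ_i ‖A_i − Â_i‖². -/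
open scoped Matrix.Norms.L2Operator
open scoped Matrix

/-- The Euclidean (ℓ²) norm of a vector. -/
noncomputable def enorm₂ {n : ℕ} (v : Fin n → ℝ) : ℝ := Real.sqrt (∑ i, v i ^ 2)

/-- The Frobenius norm of a matrix. -/
noncomputable def frobNorm {m n : ℕ} (M : Matrix (Fin m) (Fin n) ℝ) : ℝ :=
  Real.sqrt (∑ i, ∑ j, M i j ^ 2)

/-- The smallest singular value of a (full row rank) matrix
`C ∈ ℝ^{m × n}`: the infimum of `‖Cᵀ v‖` over unit vectors `v`. -/
noncomputable def sMin {m n : ℕ} (C : Matrix (Fin m) (Fin n) ℝ) : ℝ :=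
  sInf ((fun v : Fin m → ℝ => enorm₂ (Cᵀ.mulVec v)) '' {v | enorm₂ v = 1})

lemma enorm₂_nonneg {n : ℕ} (v : Fin n → ℝ) : 0 ≤ enorm₂ v := Real.sqrt_nonneg _

lemma frobNorm_nonneg {m n : ℕ} (M : Matrix (Fin m) (Fin n) ℝ) : 0 ≤ frobNorm M :=
  Real.sqrt_nonneg _

lemma sq_enorm {n : ℕ} (v : Fin n → ℝ) : enorm₂ v ^ 2 = ∑ i, v i ^ 2 :=
  Real.sq_sqrt (Finset.sum_nonneg fun _ _ => sq_nonneg _)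

lemma sq_frobNorm {m n : ℕ} (M : Matrix (Fin m) (Fin n) ℝ) :
    frobNorm M ^ 2 = ∑ i, ∑ j, M i j ^ 2 :=
  Real.sq_sqrt (Finset.sum_nonneg fun _ _ => Finset.sum_nonneg fun _ _ => sq_nonneg _)

lemma enorm₂_eq_zero {n : ℕ} {v : Fin n → ℝ} (h : enorm₂ v = 0) : v = 0 := by
  have hs : ∑ i, v i ^ 2 = 0 :=
    le_antisymm (Real.sqrt_eq_zero'.mp h) (Finset.sum_nonneg fun _ _ => sq_nonneg _)
  funext i
  have := (Finset.sum_eq_zero_iff_of_nonneg (fun _ _ => sq_nonneg _)).mp hs i (Finset.mem_univ i)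
  simpa using pow_eq_zero_iff two_ne_zero |>.mp this

lemma enorm₂_eq_norm {n : ℕ} (v : Fin n → ℝ) :
    enorm₂ v = ‖(WithLp.equiv 2 (Fin n → ℝ)).symm v‖ := by
  rw [EuclideanSpace.norm_eq]
  simp [enorm₂, sq_abs]

lemma enorm₂_smul {n : ℕ} (c : ℝ) (v : Fin n → ℝ) : enorm₂ (c • v) = |c| * enorm₂ v := by
  rw [enorm₂_eq_norm, enorm₂_eq_norm]
  have : (WithLp.equiv 2 (Fin n → ℝ)).symm (c • v)
      = c • (WithLp.equiv 2 (Fin n → ℝ)).symm v := rfl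
  rw [this, norm_smul, Real.norm_eq_abs]

lemma enorm₂_sub_le {n : ℕ} (v w : Fin n → ℝ) : enorm₂ (v - w) ≤ enorm₂ v + enorm₂ w := by
  rw [enorm₂_eq_norm, enorm₂_eq_norm, enorm₂_eq_norm]
  have : (WithLp.equiv 2 (Fin n → ℝ)).symm (v - w)
      = (WithLp.equiv 2 (Fin n → ℝ)).symm v - (WithLp.equiv 2 (Fin n → ℝ)).symm w := rfl
  rw [this]; exact norm_sub_le _ _

lemma dot_le_enorm {n : ℕ} (v w : Fin n → ℝ) : v ⬝ᵥ w ≤ enorm₂ v * enorm₂ w := by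
  have h := Finset.sum_mul_sq_le_sq_mul_sq Finset.univ v w
  have h2 : (v ⬝ᵥ w) ^ 2 ≤ (enorm₂ v * enorm₂ w) ^ 2 := by
    rw [mul_pow, sq_enorm, sq_enorm]; exact h
  calc v ⬝ᵥ w ≤ |v ⬝ᵥ w| := le_abs_self _
    _ = Real.sqrt ((v ⬝ᵥ w) ^ 2) := (Real.sqrt_sq_eq_abs _).symm
    _ ≤ Real.sqrt ((enorm₂ v * enorm₂ w) ^ 2) := Real.sqrt_le_sqrt h2
    _ = enorm₂ v * enorm₂ w :=
        Real.sqrt_sq (mul_nonneg (enorm₂_nonneg _) (enorm₂_nonneg _))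

lemma enorm₂_mulVec_le {a b : ℕ} (M : Matrix (Fin a) (Fin b) ℝ) (v : Fin a → ℝ) :
    enorm₂ (Mᵀ.mulVec v) ≤ frobNorm M * enorm₂ v := by
  have key : ∑ j, (Mᵀ.mulVec v) j ^ 2 ≤ (∑ i, ∑ j, M i j ^ 2) * ∑ i, v i ^ 2 := by
    calc ∑ j, (Mᵀ.mulVec v) j ^ 2 ≤ ∑ j, ((∑ i, M i j ^ 2) * ∑ i, v i ^ 2) := by
          apply Finset.sum_le_sum; intro j _
          have := Finset.sum_mul_sq_le_sq_mul_sq Finset.univ (fun i => M i j) v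
          simpa [Matrix.mulVec, Matrix.transpose_apply, dotProduct] using this
      _ = (∑ i, ∑ j, M i j ^ 2) * ∑ i, v i ^ 2 := by rw [← Finset.sum_mul, Finset.sum_comm]
  calc enorm₂ (Mᵀ.mulVec v) = Real.sqrt (∑ j, (Mᵀ.mulVec v) j ^ 2) := rfl
    _ ≤ Real.sqrt ((∑ i, ∑ j, M i j ^ 2) * ∑ i, v i ^ 2) := Real.sqrt_le_sqrt key
    _ = frobNorm M * enorm₂ v := by
        rw [Real.sqrt_mul (x := ∑ i, ∑ j, M i j ^ 2) (Finset.sum_nonneg fun _ _ => Finset.sum_nonneg fun _ _ => sq_nonneg _)]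
        rfl

lemma enorm₂_row_le {a b : ℕ} (M : Matrix (Fin a) (Fin b) ℝ) (i : Fin a) :
    enorm₂ (M i) ≤ frobNorm M := by
  apply Real.sqrt_le_sqrt
  exact Finset.single_le_sum (f := fun i => ∑ j, M i j ^ 2)
    (fun _ _ => Finset.sum_nonneg fun _ _ => sq_nonneg _) (Finset.mem_univ i)

lemma row_mul {a b c : ℕ} (P : Matrix (Fin a) (Fin b) ℝ) (Q : Matrix (Fin b) (Fin c) ℝ)
    (i : Fin a) : (P * Q) i = P i ᵥ* Q := by
  funext j; simp [Matrix.mul_apply, Matrix.vecMul, dotProduct]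

lemma sMin_le {a b : ℕ} (C : Matrix (Fin a) (Fin b) ℝ) {v : Fin a → ℝ} (hv : enorm₂ v = 1) :
    sMin C ≤ enorm₂ (Cᵀ.mulVec v) :=
  csInf_le ⟨0, by rintro t ⟨u, _, rfl⟩; exact enorm₂_nonneg _⟩ ⟨v, hv, rfl⟩

theorem stmt9 {dx m : ℕ} (A : Matrix (Fin dx) (Fin dx) ℝ)
    (Ck C₀ C₁ Y : Matrix (Fin dx) (Fin m) ℝ)
    (κ δ : ℝ) (hκ : 0 < κ)
    (hrank : Ck.rank = dx)
    (hY : Y = A * Ck)  -- `A` solves `X C_k = Y`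
    (huniq : ∀ X : Matrix (Fin dx) (Fin dx) ℝ, X * Ck = Y → X = A)
    (hσ : Real.sqrt κ⁻¹ ≤ sMin Ck)
    (hδ : δ < sMin Ck)
    (hC₀ : frobNorm (C₀ - Ck) ≤ δ) (hC₁ : frobNorm (C₁ - Y) ≤ δ) :
    let Ahat := C₁ * C₀ᵀ * (C₀ * C₀ᵀ)⁻¹
    (∀ i : Fin dx,
      enorm₂ (fun j => A i j - Ahat i j) ≤
        (δ + δ * enorm₂ (A i)) / (sMin Ck - δ)) ∧
    frobNorm (A - Ahat) ^ 2 = ∑ i, enorm₂ (fun j => A i j - Ahat i j) ^ 2 := by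
  intro Ahat
  have hδ0 : 0 ≤ δ := le_trans (frobNorm_nonneg _) hC₀
  have hs0 : 0 < sMin Ck - δ := sub_pos.mpr hδ
  constructor
  · intro i
    -- a unit vector exists
    have hunit : enorm₂ (Pi.single i (1 : ℝ)) = 1 := by
      have h1 : ∀ j, (Pi.single i (1 : ℝ) : Fin dx → ℝ) j ^ 2 = if j = i then (1:ℝ) else 0 := by
        intro j; by_cases h : j = i <;> simp [Pi.single_apply, h]
      simp only [enorm₂, h1, Finset.sum_ite_eq', Finset.mem_univ, if_true, Real.sqrt_one]
    -- lower bound on enorm (C₀ᵀ *ᵥ v) for unit v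
    have hswlow : ∀ v : Fin dx → ℝ, enorm₂ v = 1 →
        sMin Ck - δ ≤ enorm₂ (C₀ᵀ.mulVec v) := by
      intro v hv
      have h1 : sMin Ck ≤ enorm₂ (Ckᵀ.mulVec v) := sMin_le Ck hv
      have h2 : enorm₂ ((C₀ - Ck)ᵀ.mulVec v) ≤ δ :=
        calc enorm₂ ((C₀ - Ck)ᵀ.mulVec v) ≤ frobNorm (C₀ - Ck) * enorm₂ v := enorm₂_mulVec_le _ _
          _ = frobNorm (C₀ - Ck) := by rw [hv, mul_one]
          _ ≤ δ := hC₀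
      have h3 : enorm₂ (Ckᵀ.mulVec v) ≤ enorm₂ (C₀ᵀ.mulVec v) + enorm₂ ((C₀ - Ck)ᵀ.mulVec v) := by
        have heq : Ckᵀ.mulVec v = C₀ᵀ.mulVec v - (C₀ - Ck)ᵀ.mulVec v := by
          rw [Matrix.transpose_sub, Matrix.sub_mulVec]; abel
        rw [heq]; exact enorm₂_sub_le _ _
      linarith
    have hC₀low : sMin Ck - δ ≤ sMin C₀ :=
      le_csInf (Set.Nonempty.image _ ⟨Pi.single i (1:ℝ), hunit⟩) (by rintro b ⟨v, hv, rfl⟩; exact hswlow v hv)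
    have hscale : ∀ z : Fin dx → ℝ, (sMin Ck - δ) * enorm₂ z ≤ enorm₂ (C₀ᵀ.mulVec z) := by
      intro z
      rcases eq_or_ne z 0 with rfl | hz
      · simp [enorm₂, Matrix.mulVec_zero]
      · have ht : 0 < enorm₂ z :=
          lt_of_le_of_ne (enorm₂_nonneg z) (fun h => hz (enorm₂_eq_zero h.symm))
        have hv : enorm₂ ((enorm₂ z)⁻¹ • z) = 1 := by
          rw [enorm₂_smul, abs_of_nonneg (inv_nonneg.mpr (enorm₂_nonneg z)),
            inv_mul_cancel₀ ht.ne']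
        have h1 := hswlow _ hv
        have h2 : enorm₂ (C₀ᵀ.mulVec ((enorm₂ z)⁻¹ • z))
            = (enorm₂ z)⁻¹ * enorm₂ (C₀ᵀ.mulVec z) := by
          rw [Matrix.mulVec_smul, enorm₂_smul, abs_of_nonneg (inv_nonneg.mpr (enorm₂_nonneg z))]
        rw [h2] at h1
        calc (sMin Ck - δ) * enorm₂ z
            ≤ ((enorm₂ z)⁻¹ * enorm₂ (C₀ᵀ.mulVec z)) * enorm₂ z :=
              mul_le_mul_of_nonneg_right h1 (enorm₂_nonneg z)
          _ = enorm₂ (C₀ᵀ.mulVec z) := by field_simp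
    -- invertibility of the Gram matrix
    have hGunit : IsUnit (C₀ * C₀ᵀ).det := by
      rw [← Matrix.isUnit_iff_isUnit_det, ← Matrix.mulVec_injective_iff_isUnit]
      have key : ∀ z : Fin dx → ℝ, (C₀ * C₀ᵀ) *ᵥ z = 0 → z = 0 := by
        intro z h0
        have hdot : (C₀ᵀ *ᵥ z) ⬝ᵥ (C₀ᵀ *ᵥ z) = 0 := by
          calc (C₀ᵀ *ᵥ z) ⬝ᵥ (C₀ᵀ *ᵥ z) = (z ᵥ* C₀) ⬝ᵥ (C₀ᵀ *ᵥ z) := by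
                rw [Matrix.mulVec_transpose]
            _ = z ⬝ᵥ (C₀ *ᵥ (C₀ᵀ *ᵥ z)) := (Matrix.dotProduct_mulVec _ _ _).symm
            _ = z ⬝ᵥ ((C₀ * C₀ᵀ) *ᵥ z) := by rw [Matrix.mulVec_mulVec]
            _ = 0 := by rw [h0]; simp [dotProduct]
        have hsum : ∑ j, (C₀ᵀ *ᵥ z) j ^ 2 = 0 := by
          simpa [dotProduct, pow_two] using hdot
        have henz : enorm₂ (C₀ᵀ *ᵥ z) = 0 := by
          unfold enorm₂; rw [hsum, Real.sqrt_zero]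
        have hle := hscale z
        rw [henz] at hle
        have : enorm₂ z = 0 := by nlinarith [enorm₂_nonneg z]
        exact enorm₂_eq_zero this
      intro a b hab
      have := key (a - b) (by rw [Matrix.mulVec_sub, hab, sub_self])
      exact sub_eq_zero.mp this
    -- the key matrix identity
    have hmat : (A - Ahat) * (C₀ * C₀ᵀ) = (A * C₀ - C₁) * C₀ᵀ := by
      have h1 : Ahat * (C₀ * C₀ᵀ) = C₁ * C₀ᵀ := by
        show C₁ * C₀ᵀ * (C₀ * C₀ᵀ)⁻¹ * (C₀ * C₀ᵀ) = C₁ * C₀ᵀ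
        rw [Matrix.mul_assoc, Matrix.nonsing_inv_mul _ hGunit, Matrix.mul_one]
      rw [Matrix.sub_mul, h1, Matrix.sub_mul, ← Matrix.mul_assoc]
    set x : Fin dx → ℝ := fun j => A i j - Ahat i j with hxdef
    set w : Fin m → ℝ := (A * C₀ - C₁) i with hwdef
    have hxrow : x = (A - Ahat) i := by funext j; simp [hxdef, Matrix.sub_apply]
    have hrow : x ᵥ* (C₀ * C₀ᵀ) = w ᵥ* C₀ᵀ := by
      rw [hxrow, hwdef, ← row_mul, hmat, row_mul]
    have hGsymm : (C₀ * C₀ᵀ)ᵀ = C₀ * C₀ᵀ := by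
      rw [Matrix.transpose_mul, Matrix.transpose_transpose]
    have hCu : C₀ *ᵥ (C₀ᵀ *ᵥ x) = C₀ *ᵥ w := by
      rw [Matrix.mulVec_mulVec]
      calc (C₀ * C₀ᵀ) *ᵥ x = x ᵥ* (C₀ * C₀ᵀ) := by
            conv_lhs => rw [← hGsymm, Matrix.mulVec_transpose]
        _ = w ᵥ* C₀ᵀ := hrow
        _ = C₀ *ᵥ w := Matrix.vecMul_transpose _ _
    have hu_le_w : enorm₂ (C₀ᵀ *ᵥ x) ≤ enorm₂ w := by
      have hdot : (C₀ᵀ *ᵥ x) ⬝ᵥ (C₀ᵀ *ᵥ x) = (C₀ᵀ *ᵥ x) ⬝ᵥ w := by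
        calc (C₀ᵀ *ᵥ x) ⬝ᵥ (C₀ᵀ *ᵥ x) = (x ᵥ* C₀) ⬝ᵥ (C₀ᵀ *ᵥ x) := by
              rw [Matrix.mulVec_transpose]
          _ = x ⬝ᵥ (C₀ *ᵥ (C₀ᵀ *ᵥ x)) := (Matrix.dotProduct_mulVec _ _ _).symm
          _ = x ⬝ᵥ (C₀ *ᵥ w) := by rw [hCu]
          _ = (x ᵥ* C₀) ⬝ᵥ w := Matrix.dotProduct_mulVec _ _ _
          _ = (C₀ᵀ *ᵥ x) ⬝ᵥ w := by rw [Matrix.mulVec_transpose]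
      have hsq : enorm₂ (C₀ᵀ *ᵥ x) ^ 2 ≤ enorm₂ (C₀ᵀ *ᵥ x) * enorm₂ w := by
        rw [sq_enorm]
        calc ∑ j, (C₀ᵀ *ᵥ x) j ^ 2 = (C₀ᵀ *ᵥ x) ⬝ᵥ (C₀ᵀ *ᵥ x) := by
              simp [dotProduct, pow_two]
          _ = (C₀ᵀ *ᵥ x) ⬝ᵥ w := hdot
          _ ≤ enorm₂ (C₀ᵀ *ᵥ x) * enorm₂ w := dot_le_enorm _ _
      nlinarith [enorm₂_nonneg (C₀ᵀ *ᵥ x), enorm₂_nonneg w]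
    have hw_le : enorm₂ w ≤ δ + δ * enorm₂ (A i) := by
      have hwsplit : w = ((C₀ - Ck)ᵀ *ᵥ (A i)) - (C₁ - Y) i := by
        subst hY
        funext j
        simp only [hwdef, Matrix.sub_apply, Matrix.mulVec, dotProduct,
          Matrix.transpose_apply, Matrix.mul_apply, Pi.sub_apply, mul_sub, sub_mul,
          Finset.sum_sub_distrib]
        simp only [mul_comm]
        ring
      calc enorm₂ w ≤ enorm₂ ((C₀ - Ck)ᵀ *ᵥ (A i)) + enorm₂ ((C₁ - Y) i) :=
            hwsplit ▸ enorm₂_sub_le _ _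
        _ ≤ frobNorm (C₀ - Ck) * enorm₂ (A i) + frobNorm (C₁ - Y) :=
            add_le_add (enorm₂_mulVec_le _ _) (enorm₂_row_le _ _)
        _ ≤ δ * enorm₂ (A i) + δ :=
            add_le_add (mul_le_mul_of_nonneg_right hC₀ (enorm₂_nonneg _)) hC₁
        _ = δ + δ * enorm₂ (A i) := by ring
    have hfinal : (sMin Ck - δ) * enorm₂ x ≤ δ + δ * enorm₂ (A i) :=
      le_trans (hscale x) (le_trans hu_le_w hw_le)
    rw [le_div_iff₀ hs0]
    linarith
  · rw [sq_frobNorm]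
    refine Finset.sum_congr rfl fun i _ => ?_
    rw [sq_enorm]
    exact Finset.sum_congr rfl fun j _ => by rw [Matrix.sub_apply]
end

section
/- Let Σ be a positive semidefinite block matrix Σ = [[Σ_xx, Σ_xu],[Σ_xuᵀ, Σ_uu]] satisfying the steady-state constraint Σ_xx = (A B) Σ (A B)ᵀ + I and Tr(Σ) ≤ ν. Then Σ_xx ⪰ I (so Σ_xx is invertible), and the controller K = Σ_xuᵀ Σ_xx⁻¹ is (√ν, 1/(2ν))-strongly stable for (A, B). -/
open scoped Matrix.Norms.L2Operator
open scoped Matrix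
open scoped MatrixOrder

set_option maxHeartbeats 4000000

open Matrix in
private lemma esq' {m : ℕ} (y : EuclideanSpace ℝ (Fin m)) :
    ‖y‖ ^ 2 = (WithLp.equiv 2 _ y) ⬝ᵥ (WithLp.equiv 2 _ y) := by
  rw [EuclideanSpace.norm_eq, Real.sq_sqrt (by positivity)]
  simp [dotProduct, sq]

open Matrix in
private lemma opNorm_le_sqrt' {m n : ℕ} (M : Matrix (Fin m) (Fin n) ℝ) (c : ℝ) (hc : 0 ≤ c)
    (h : (c • (1 : Matrix (Fin n) (Fin n) ℝ) - Mᵀ * M).PosSemidef) :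
    ‖M‖ ≤ Real.sqrt c := by
  rw [Matrix.l2_opNorm_def]
  refine ContinuousLinearMap.opNorm_le_bound _ (Real.sqrt_nonneg c) fun x => ?_
  have key : ‖(Matrix.toEuclideanLin.trans LinearMap.toContinuousLinearMap M) x‖ ^ 2
      ≤ c * ‖x‖ ^ 2 := by
    have h2 := h.dotProduct_mulVec_nonneg (WithLp.equiv 2 _ x)
    simp only [sub_mulVec, dotProduct_sub, smul_mulVec, one_mulVec, dotProduct_smul,
      star_trivial, smul_eq_mul, sub_nonneg, ← Matrix.mulVec_mulVec] at h2
    rw [Matrix.dotProduct_mulVec _ Mᵀ, Matrix.vecMul_transpose] at h2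
    rw [esq', esq']
    simpa using h2
  calc ‖(Matrix.toEuclideanLin.trans LinearMap.toContinuousLinearMap M) x‖
      = Real.sqrt (‖(Matrix.toEuclideanLin.trans LinearMap.toContinuousLinearMap M) x‖ ^ 2) := by
        rw [Real.sqrt_sq (norm_nonneg _)]
    _ ≤ Real.sqrt (c * ‖x‖ ^ 2) := Real.sqrt_le_sqrt key
    _ = Real.sqrt c * ‖x‖ := by
        rw [Real.sqrt_mul hc, Real.sqrt_sq (norm_nonneg _)]

open Matrix in
private lemma trace_nonneg' {n : ℕ} {P : Matrix (Fin n) (Fin n) ℝ} (hP : P.PosSemidef) :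
    0 ≤ P.trace := by
  obtain ⟨B, hB⟩ := CStarAlgebra.nonneg_iff_eq_star_mul_self.mp (Matrix.nonneg_iff_posSemidef.mpr hP)
  rw [Matrix.star_eq_conjTranspose] at hB
  subst hB
  rw [Matrix.trace]
  refine Finset.sum_nonneg fun i _ => ?_
  simp only [Matrix.diag_apply, Matrix.mul_apply, Matrix.conjTranspose_apply, star_trivial]
  exact Finset.sum_nonneg fun j _ => mul_self_nonneg _

open Matrix in
private lemma quad_le_trace' {n : ℕ} {P : Matrix (Fin n) (Fin n) ℝ} (hP : P.PosSemidef)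
    (x : Fin n → ℝ) : x ⬝ᵥ P *ᵥ x ≤ P.trace * (x ⬝ᵥ x) := by
  obtain ⟨B, hB⟩ := CStarAlgebra.nonneg_iff_eq_star_mul_self.mp (Matrix.nonneg_iff_posSemidef.mpr hP)
  rw [Matrix.star_eq_conjTranspose] at hB
  subst hB
  have h1 : x ⬝ᵥ (Bᴴ * B) *ᵥ x = (B *ᵥ x) ⬝ᵥ (B *ᵥ x) := by
    rw [← Matrix.mulVec_mulVec, Matrix.dotProduct_mulVec _ Bᴴ,
      Matrix.conjTranspose_eq_transpose_of_trivial, Matrix.vecMul_transpose]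
  rw [h1]
  have h2 : (Bᴴ * B).trace = ∑ i, ∑ j, B i j ^ 2 := by
    rw [Matrix.trace]
    have hd : ∀ i, (Bᴴ * B).diag i = ∑ j, B j i ^ 2 := fun i => by
      simp [Matrix.diag_apply, Matrix.mul_apply, sq]
    simp only [hd]
    exact Finset.sum_comm
  rw [h2, Finset.sum_mul]
  unfold Matrix.mulVec dotProduct
  refine Finset.sum_le_sum fun i _ => ?_
  have := Finset.sum_mul_sq_le_sq_mul_sq Finset.univ (fun j => B i j) x
  calc (fun j => B i j) ⬝ᵥ x * ((fun j => B i j) ⬝ᵥ x)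
      = (∑ j, B i j * x j) ^ 2 := by rw [sq]; rfl
    _ ≤ (∑ j, B i j ^ 2) * ∑ j, x j ^ 2 := this
    _ = (∑ j, B i j ^ 2) * (x ⬝ᵥ x) := by congr 1; simp [dotProduct, sq]

open Matrix in
private lemma smul_one_sub_psd' {n : ℕ} {P : Matrix (Fin n) (Fin n) ℝ} (hP : P.PosSemidef)
    {c : ℝ} (htr : P.trace ≤ c) : (c • (1 : Matrix (Fin n) (Fin n) ℝ) - P).PosSemidef := by
  refine Matrix.PosSemidef.of_dotProduct_mulVec_nonneg ?_ ?_
  · have : (c • (1 : Matrix (Fin n) (Fin n) ℝ) - P)ᴴ = c • 1 - P := by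
      rw [Matrix.conjTranspose_sub, Matrix.conjTranspose_smul, Matrix.conjTranspose_one, hP.1.eq]
      norm_num
    exact this
  · intro x
    simp only [sub_mulVec, dotProduct_sub, smul_mulVec, one_mulVec, dotProduct_smul,
      star_trivial, smul_eq_mul, sub_nonneg]
    calc x ⬝ᵥ P *ᵥ x ≤ P.trace * (x ⬝ᵥ x) := quad_le_trace' hP x
      _ ≤ c * (x ⬝ᵥ x) := by
          refine mul_le_mul_of_nonneg_right htr ?_
          simpa [dotProduct, sq] using
            Finset.sum_nonneg fun j (_ : j ∈ Finset.univ) => sq_nonneg (x j)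

open Matrix in
private lemma psd_smul' {n : ℕ} {P : Matrix (Fin n) (Fin n) ℝ} (hP : P.PosSemidef)
    {c : ℝ} (hc : 0 ≤ c) : (c • P).PosSemidef := by
  refine Matrix.PosSemidef.of_dotProduct_mulVec_nonneg ?_ ?_
  · have : (c • P)ᴴ = c • P := by
      rw [Matrix.conjTranspose_smul, hP.1.eq]; norm_num
    exact this
  · intro x
    simp only [smul_mulVec, dotProduct_smul, smul_eq_mul]
    exact mul_nonneg hc (by simpa using hP.dotProduct_mulVec_nonneg x)

open Matrix in
private lemma trace_fromBlocks' {m n : ℕ} (A : Matrix (Fin m) (Fin m) ℝ)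
    (B : Matrix (Fin m) (Fin n) ℝ) (C : Matrix (Fin n) (Fin m) ℝ) (D : Matrix (Fin n) (Fin n) ℝ) :
    (Matrix.fromBlocks A B C D).trace = A.trace + D.trace := by
  simp [Matrix.trace, Fintype.sum_sum_type, Matrix.fromBlocks]

theorem stmt11 {dx du : ℕ} (hdx : 0 < dx)
    (A : Matrix (Fin dx) (Fin dx) ℝ) (B : Matrix (Fin dx) (Fin du) ℝ)
    (Sxx : Matrix (Fin dx) (Fin dx) ℝ) (Sxu : Matrix (Fin dx) (Fin du) ℝ)
    (Suu : Matrix (Fin du) (Fin du) ℝ) (ν : ℝ)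
    (hpsd : (Matrix.fromBlocks Sxx Sxu Sxuᵀ Suu).PosSemidef)
    (hsteady : Sxx =
      Matrix.fromCols A B * Matrix.fromBlocks Sxx Sxu Sxuᵀ Suu *
        (Matrix.fromCols A B)ᵀ + 1)
    (htr : (Matrix.fromBlocks Sxx Sxu Sxuᵀ Suu).trace ≤ ν) :
    (Sxx - 1).PosSemidef ∧ IsUnit Sxx ∧
      StronglyStable A B (Sxuᵀ * Sxx⁻¹) (Real.sqrt ν) (1 / (2 * ν)) := by
  classical
  set Sb := Matrix.fromBlocks Sxx Sxu Sxuᵀ Suu with hSb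
  set Mc := Matrix.fromCols A B with hMc
  -- Sxx - 1 is psd
  have hconj : (Mc * Sb * Mcᵀ).PosSemidef := by
    have := hpsd.mul_mul_conjTranspose_same Mc
    rwa [Matrix.conjTranspose_eq_transpose_of_trivial] at this
  have hS1eq : Sxx - 1 = Mc * Sb * Mcᵀ := by rw [hsteady]; abel
  have hSxx1 : (Sxx - 1).PosSemidef := hS1eq ▸ hconj
  -- Sxx is positive definite
  have hSxxPD : Sxx.PosDef := by
    have h := Matrix.PosDef.posSemidef_add hSxx1 Matrix.PosDef.one
    have e : Sxx - 1 + 1 = Sxx := by abel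
    rwa [e] at h
  have hU : IsUnit Sxx := hSxxPD.isUnit
  have hdet : IsUnit Sxx.det := (Matrix.isUnit_iff_isUnit_det _).mp hU
  have hinvL : Sxx⁻¹ * Sxx = 1 := Matrix.nonsing_inv_mul _ hdet
  have hinvR : Sxx * Sxx⁻¹ = 1 := Matrix.mul_nonsing_inv _ hdet
  have hT : Sxxᵀ = Sxx := by
    have := hSxxPD.1.eq
    rwa [Matrix.conjTranspose_eq_transpose_of_trivial] at this
  have hinvT : (Sxx⁻¹)ᵀ = Sxx⁻¹ := by
    rw [Matrix.transpose_nonsing_inv, hT]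
  set K := Sxuᵀ * Sxx⁻¹ with hK
  have hKt : Kᵀ = Sxx⁻¹ * Sxu := by
    rw [hK, Matrix.transpose_mul, hinvT, Matrix.transpose_transpose]
  have hKS : K * Sxx = Sxuᵀ := by rw [hK, Matrix.mul_assoc, hinvL, Matrix.mul_one]
  have hSKt : Sxx * Kᵀ = Sxu := by
    rw [hKt, ← Matrix.mul_assoc, hinvR, Matrix.one_mul]
  have hKSKt : K * Sxx * Kᵀ = Sxuᵀ * Sxx⁻¹ * Sxu := by
    rw [hKS, hKt, ← Matrix.mul_assoc]
  -- Schur complement is psd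
  haveI : Invertible Sxx := hU.invertible
  have hSchur : (Suu - Sxuᵀ * Sxx⁻¹ * Sxu).PosSemidef := by
    have hpsd' : (Matrix.fromBlocks Sxx Sxu Sxuᴴ Suu).PosSemidef := by
      rwa [Matrix.conjTranspose_eq_transpose_of_trivial]
    have := (Matrix.PosDef.fromBlocks₁₁ Sxu Suu hSxxPD).mp hpsd'
    rwa [Matrix.conjTranspose_eq_transpose_of_trivial] at this
  -- Expand the steady-state product
  have hMS : Mc * Sb * Mcᵀ
      = A * Sxx * Aᵀ + B * Sxuᵀ * Aᵀ + A * Sxu * Bᵀ + B * Suu * Bᵀ := by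
    rw [hMc, hSb, Matrix.fromCols_mul_fromBlocks, Matrix.transpose_fromCols,
      Matrix.fromCols_mul_fromRows, Matrix.add_mul, Matrix.add_mul]
    abel
  have hX : (A + B * K) * Sxx * (A + B * K)ᵀ
      = A * Sxx * Aᵀ + B * Sxuᵀ * Aᵀ + A * Sxu * Bᵀ + B * (Sxuᵀ * Sxx⁻¹ * Sxu) * Bᵀ := by
    have expand : (A + B * K) * Sxx * (A + B * K)ᵀ
        = A * Sxx * Aᵀ + B * (K * Sxx) * Aᵀ + A * (Sxx * Kᵀ) * Bᵀ
          + B * (K * Sxx * Kᵀ) * Bᵀ := by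
      rw [Matrix.transpose_add, Matrix.transpose_mul]
      simp only [Matrix.add_mul, Matrix.mul_add, Matrix.mul_assoc]
      abel
    rw [expand, hKSKt, hKS, hSKt]
  have hdiff : Sxx - ((A + B * K) * Sxx * (A + B * K)ᵀ + 1)
      = B * (Suu - Sxuᵀ * Sxx⁻¹ * Sxu) * Bᵀ := by
    nth_rewrite 1 [hsteady]
    rw [hMS, hX, Matrix.mul_sub, Matrix.sub_mul]
    abel
  have hkey : (Sxx - ((A + B * K) * Sxx * (A + B * K)ᵀ + 1)).PosSemidef := by
    rw [hdiff]
    have := hSchur.mul_mul_conjTranspose_same B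
    rwa [Matrix.conjTranspose_eq_transpose_of_trivial] at this
  -- trace facts
  have hSuu_psd : Suu.PosSemidef := by
    have h := hpsd.submatrix Sum.inr
    have e : Sb.submatrix (Sum.inr : Fin du → Fin dx ⊕ Fin du) Sum.inr = Suu := by
      ext i j; rfl
    rwa [e] at h
  have htrS1 : 0 ≤ (Sxx - 1).trace := trace_nonneg' hSxx1
  have htrSxx : (dx : ℝ) ≤ Sxx.trace := by
    have : (Sxx - 1).trace = Sxx.trace - (dx : ℝ) := by
      rw [Matrix.trace_sub, Matrix.trace_one]; simp
    linarith [this ▸ htrS1]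
  have htrSuu0 : 0 ≤ Suu.trace := trace_nonneg' hSuu_psd
  have htrblocks : Sb.trace = Sxx.trace + Suu.trace := trace_fromBlocks' _ _ _ _
  have hν1 : (1 : ℝ) ≤ ν := by
    have hdx1 : (1 : ℝ) ≤ (dx : ℝ) := by exact_mod_cast hdx
    rw [htrblocks] at htr
    linarith
  have hν0 : (0 : ℝ) < ν := by linarith
  have htrSxxν : Sxx.trace ≤ ν := by rw [htrblocks] at htr; linarith
  have htrSuuν : Suu.trace ≤ ν := by rw [htrblocks] at htr; linarith
  -- norm bound for K
  have hKnorm : ‖K‖ ≤ Real.sqrt ν := by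
    have hKt' : ‖K‖ = ‖Kᵀ‖ := by
      rw [← Matrix.conjTranspose_eq_transpose_of_trivial, Matrix.l2_opNorm_conjTranspose]
    rw [hKt']
    refine opNorm_le_sqrt' Kᵀ ν (le_of_lt hν0) ?_
    rw [Matrix.transpose_transpose]
    have e3 : K * (Sxx - 1) * Kᵀ = Sxuᵀ * Sxx⁻¹ * Sxu - K * Kᵀ := by
      rw [Matrix.mul_sub, Matrix.mul_one, Matrix.sub_mul, hKSKt]
    have idty : ν • (1 : Matrix (Fin du) (Fin du) ℝ) - K * Kᵀ
        = (ν • 1 - Suu) + ((Suu - Sxuᵀ * Sxx⁻¹ * Sxu) + K * (Sxx - 1) * Kᵀ) := by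
      rw [e3]; abel
    rw [idty]
    refine (smul_one_sub_psd' hSuu_psd htrSuuν).add (hSchur.add ?_)
    have := hSxx1.mul_mul_conjTranspose_same K
    rwa [Matrix.conjTranspose_eq_transpose_of_trivial] at this
  -- square root of Sxx
  set H := CFC.sqrt Sxx with hHdef
  have hHsq : H * H = Sxx := CFC.sqrt_mul_sqrt_self Sxx (Matrix.nonneg_iff_posSemidef.mpr hSxxPD.posSemidef)
  have hHpsd : H.PosSemidef := Matrix.nonneg_iff_posSemidef.mp (CFC.sqrt_nonneg Sxx)
  have hHT : Hᵀ = H := by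
    have := hHpsd.1.eq
    rwa [Matrix.conjTranspose_eq_transpose_of_trivial] at this
  have hHdet : IsUnit H.det := by
    rw [isUnit_iff_ne_zero]
    intro h0
    have : Sxx.det = 0 := by rw [← hHsq, Matrix.det_mul, h0, mul_zero]
    exact (isUnit_iff_ne_zero.mp hdet) this
  have hHU : IsUnit H := (Matrix.isUnit_iff_isUnit_det _).mpr hHdet
  have hHinvL : H⁻¹ * H = 1 := Matrix.nonsing_inv_mul _ hHdet
  have hHinvR : H * H⁻¹ = 1 := Matrix.mul_nonsing_inv _ hHdet
  have hHinvT : (H⁻¹)ᵀ = H⁻¹ := by rw [Matrix.transpose_nonsing_inv, hHT]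
  have hHinvsq : H⁻¹ * H⁻¹ = Sxx⁻¹ := by rw [← hHsq, Matrix.mul_inv_rev]
  have hmid1 : H⁻¹ * Sxx * H⁻¹ = 1 := by
    rw [← hHsq]
    calc H⁻¹ * (H * H) * H⁻¹ = (H⁻¹ * H) * (H * H⁻¹) := by noncomm_ring
      _ = 1 := by rw [hHinvL, hHinvR, Matrix.one_mul]
  set L := H⁻¹ * (A + B * K) * H with hLdef
  have hHLH : A + B * K = H * L * H⁻¹ := by
    have : H * (H⁻¹ * (A + B * K) * H) * H⁻¹
        = (H * H⁻¹) * (A + B * K) * (H * H⁻¹) := by noncomm_ring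
    rw [hLdef, this, hHinvR, Matrix.one_mul, Matrix.mul_one]
  -- norm of H
  have hHnorm : ‖H‖ ≤ Real.sqrt ν := by
    refine opNorm_le_sqrt' H ν (le_of_lt hν0) ?_
    rw [hHT, hHsq]
    exact smul_one_sub_psd' hSxxPD.posSemidef htrSxxν
  -- 1 - Sxx⁻¹ is psd
  have hone_sub_inv : ((1 : Matrix (Fin dx) (Fin dx) ℝ) - Sxx⁻¹).PosSemidef := by
    have idty : H⁻¹ * (Sxx - 1) * H⁻¹ = 1 - Sxx⁻¹ := by
      calc H⁻¹ * (Sxx - 1) * H⁻¹ = H⁻¹ * Sxx * H⁻¹ - H⁻¹ * H⁻¹ := by noncomm_ring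
        _ = 1 - Sxx⁻¹ := by rw [hmid1, hHinvsq]
    have := hSxx1.mul_mul_conjTranspose_same H⁻¹
    rw [Matrix.conjTranspose_eq_transpose_of_trivial, hHinvT, idty] at this
    exact this
  have hHinvnorm : ‖H⁻¹‖ ≤ 1 := by
    have h := opNorm_le_sqrt' H⁻¹ 1 zero_le_one ?_
    · rwa [Real.sqrt_one] at h
    · rw [hHinvT, hHinvsq, one_smul]
      exact hone_sub_inv
  have hHH : ‖H‖ * ‖H⁻¹‖ ≤ Real.sqrt ν := by
    calc ‖H‖ * ‖H⁻¹‖ ≤ Real.sqrt ν * 1 :=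
          mul_le_mul hHnorm hHinvnorm (norm_nonneg _) (Real.sqrt_nonneg ν)
      _ = Real.sqrt ν := mul_one _
  -- norm of L
  have hinv_ge : (Sxx⁻¹ - (1 / ν) • (1 : Matrix (Fin dx) (Fin dx) ℝ)).PosSemidef := by
    have idty : H⁻¹ * (ν • 1 - Sxx) * H⁻¹ = ν • Sxx⁻¹ - 1 := by
      calc H⁻¹ * (ν • 1 - Sxx) * H⁻¹
          = ν • (H⁻¹ * H⁻¹) - H⁻¹ * Sxx * H⁻¹ := by
            rw [Matrix.mul_sub, Matrix.sub_mul, Matrix.mul_smul, Matrix.smul_mul,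
              Matrix.mul_one]
        _ = ν • Sxx⁻¹ - 1 := by rw [hmid1, hHinvsq]
    have hpsd2 : (ν • Sxx⁻¹ - 1).PosSemidef := by
      have := (smul_one_sub_psd' hSxxPD.posSemidef htrSxxν).mul_mul_conjTranspose_same H⁻¹
      rwa [Matrix.conjTranspose_eq_transpose_of_trivial, hHinvT, idty] at this
    have := psd_smul' hpsd2 (c := 1 / ν) (by positivity)
    have e : (1 / ν) • (ν • Sxx⁻¹ - 1) = Sxx⁻¹ - (1 / ν) • 1 := by
      rw [smul_sub, smul_smul, one_div, inv_mul_cancel₀ (ne_of_gt hν0), one_smul]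
    rwa [e] at this
  have hLLt : L * Lᵀ = H⁻¹ * ((A + B * K) * Sxx * (A + B * K)ᵀ) * H⁻¹ := by
    rw [hLdef, Matrix.transpose_mul, Matrix.transpose_mul, hHT, hHinvT, ← hHsq]
    noncomm_ring
  have hLbound : ‖L‖ ≤ Real.sqrt (1 - 1 / ν) := by
    have hLt' : ‖L‖ = ‖Lᵀ‖ := by
      rw [← Matrix.conjTranspose_eq_transpose_of_trivial, Matrix.l2_opNorm_conjTranspose]
    rw [hLt']
    refine opNorm_le_sqrt' Lᵀ (1 - 1 / ν) ?_ ?_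
    · have : 1 / ν ≤ 1 := by
        rw [div_le_one hν0]; exact hν1
      linarith
    rw [Matrix.transpose_transpose]
    have hmid : (H⁻¹ * (Sxx - ((A + B * K) * Sxx * (A + B * K)ᵀ + 1)) * H⁻¹).PosSemidef := by
      have := hkey.mul_mul_conjTranspose_same H⁻¹
      rwa [Matrix.conjTranspose_eq_transpose_of_trivial, hHinvT] at this
    have hmid_eq : H⁻¹ * (Sxx - ((A + B * K) * Sxx * (A + B * K)ᵀ + 1)) * H⁻¹
        = (1 - Sxx⁻¹) - L * Lᵀ := by
      rw [hLLt]
      have expand : H⁻¹ * (Sxx - ((A + B * K) * Sxx * (A + B * K)ᵀ + 1)) * H⁻¹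
          = (H⁻¹ * Sxx * H⁻¹ - H⁻¹ * H⁻¹)
            - H⁻¹ * ((A + B * K) * Sxx * (A + B * K)ᵀ) * H⁻¹ := by noncomm_ring
      rw [expand, hmid1, hHinvsq]
    have idty : (1 - 1 / ν) • (1 : Matrix (Fin dx) (Fin dx) ℝ) - L * Lᵀ
        = (Sxx⁻¹ - (1 / ν) • 1) + ((1 - Sxx⁻¹) - L * Lᵀ) := by
      rw [sub_smul, one_smul]; abel
    rw [idty, ← hmid_eq]
    exact hinv_ge.add hmid
  have hsqrt_bound : Real.sqrt (1 - 1 / ν) ≤ 1 - 1 / (2 * ν) := by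
    have h1 : (0 : ℝ) ≤ 1 - 1 / (2 * ν) := by
      have : 1 / (2 * ν) ≤ 1 := by
        rw [div_le_one (by linarith)]; linarith
      linarith
    have h2 : 1 - 1 / ν ≤ (1 - 1 / (2 * ν)) ^ 2 := by
      have hν : ν ≠ 0 := ne_of_gt hν0
      field_simp
      ring_nf
      nlinarith [sq_nonneg ν, hν0]
    calc Real.sqrt (1 - 1 / ν) ≤ Real.sqrt ((1 - 1 / (2 * ν)) ^ 2) := Real.sqrt_le_sqrt h2
      _ = 1 - 1 / (2 * ν) := Real.sqrt_sq h1
  refine ⟨hSxx1, hU, hKnorm, H, L, hHU, hHLH, hHH, ?_⟩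
  exact hLbound.trans hsqrt_bound
end

section
/- Suppose K satisfies X = (A+BK)X(A+BK)ᵀ + I for some X ⪰ I with Tr(X) ≤ κ²d_x/γ and Tr(KXKᵀ) ≤ κ⁴d_x/γ. Then the block matrix Σ = [[X, XKᵀ],[KX, KXKᵀ]] is positive semidefinite, satisfies Σ_xx = (A B)Σ(A B)ᵀ + I, and Tr(Σ) ≤ 2κ⁴d_x/γ (using κ ≥ 1), i.e., the SDP with trace bound ν = 2κ⁴d_x/γ is feasible. -/
open scoped Matrix.Norms.L2Operator
open scoped Matrix

theorem stmt12 {dx du : ℕ} (A : Matrix (Fin dx) (Fin dx) ℝ)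
    (B : Matrix (Fin dx) (Fin du) ℝ) (K : Matrix (Fin du) (Fin dx) ℝ)
    (X : Matrix (Fin dx) (Fin dx) ℝ) (κ γ : ℝ)
    (hκ : 1 ≤ κ) (hγ0 : 0 < γ) (hγ1 : γ < 1)
    (hXpsd : X.PosSemidef) (hXI : (X - 1).PosSemidef)
    (hX : X = (A + B * K) * X * (A + B * K)ᵀ + 1)
    (htrX : X.trace ≤ κ ^ 2 * dx / γ)
    (htrKXK : (K * X * Kᵀ).trace ≤ κ ^ 4 * dx / γ) :
    (Matrix.fromBlocks X (X * Kᵀ) (K * X) (K * X * Kᵀ)).PosSemidef ∧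
    X = Matrix.fromCols A B * Matrix.fromBlocks X (X * Kᵀ) (K * X) (K * X * Kᵀ) *
          (Matrix.fromCols A B)ᵀ + 1 ∧
    (Matrix.fromBlocks X (X * Kᵀ) (K * X) (K * X * Kᵀ)).trace ≤ 2 * κ ^ 4 * dx / γ := by
  have hM : Matrix.fromBlocks X (X * Kᵀ) (K * X) (K * X * Kᵀ) =
      Matrix.fromRows 1 K * X * (Matrix.fromRows 1 K)ᵀ := by
    rw [Matrix.transpose_fromRows, Matrix.fromRows_mul, Matrix.fromRows_mul_fromCols]
    simp [Matrix.mul_assoc]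
  refine ⟨?_, ?_, ?_⟩
  · rw [hM]
    have := hXpsd.mul_mul_conjTranspose_same
      (Matrix.fromRows (1 : Matrix (Fin dx) (Fin dx) ℝ) K)
    simpa using this
  · rw [hM, Matrix.transpose_fromCols]
    have h1 : Matrix.fromCols A B * (Matrix.fromRows (1 : Matrix (Fin dx) (Fin dx) ℝ) K) = A + B * K := by
      rw [Matrix.fromCols_mul_fromRows]; simp
    have h2 : (Matrix.fromRows (1 : Matrix (Fin dx) (Fin dx) ℝ) K)ᵀ * Matrix.fromRows Aᵀ Bᵀ = (A + B * K)ᵀ := by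
      rw [Matrix.transpose_fromRows, Matrix.fromCols_mul_fromRows]
      simp [Matrix.transpose_add, Matrix.transpose_mul]
    calc X = (A + B * K) * X * (A + B * K)ᵀ + 1 := hX
    _ = Matrix.fromCols A B * (Matrix.fromRows (1 : Matrix (Fin dx) (Fin dx) ℝ) K * X * (Matrix.fromRows (1 : Matrix (Fin dx) (Fin dx) ℝ) K)ᵀ) *
          Matrix.fromRows Aᵀ Bᵀ + 1 := by
        rw [← h1, Matrix.transpose_mul, Matrix.transpose_fromCols]
        simp only [Matrix.mul_assoc]
  · have htr : (Matrix.fromBlocks X (X * Kᵀ) (K * X) (K * X * Kᵀ)).trace =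
        X.trace + (K * X * Kᵀ).trace := by
      simp [Matrix.trace, Fintype.sum_sum_type, Matrix.fromBlocks, Matrix.diag]
    have hκ2 : κ ^ 2 * dx / γ ≤ κ ^ 4 * dx / γ := by
      gcongr <;> first | exact hκ | positivity | norm_num
    have heq : 2 * κ ^ 4 * (dx : ℝ) / γ = κ ^ 4 * dx / γ + κ ^ 4 * dx / γ := by ring
    rw [htr, heq]
    linarith
end

section
/- In the deterministic lower-bound construction, the state coefficients satisfy |c_{t+1}^{t+1}| = 2|c_t^t| + |a_{t+1}^t| ≥ 2|c_t^t|, where c_{t+1}^{t+1} = c_t^t d_t + a_{t+1}^t and d_t = sign(c_t^t)·sign(a_{t+1}^t)·2. Consequently, since |c_1^1| = 1, the state at time d_x satisfies ‖x_{d_x}‖ ≥ |c_{d_x}^{d_x}| ≥ 2^{d_x − 1}. -/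
/-- The Euclidean (ℓ²) norm of a vector. -/
noncomputable def euclNorm {n : ℕ} (v : Fin n → ℝ) : ℝ := Real.sqrt (∑ i, v i ^ 2)

lemma key_abs (c a : ℝ) (ha : a ≠ 0) :
    |c * (Real.sign c * Real.sign a * 2) + a| = 2 * |c| + |a| := by
  have h1 : c * Real.sign c = |c| := by
    rcases lt_trichotomy c 0 with h | h | h
    · rw [Real.sign_of_neg h, abs_of_neg h]; ring
    · simp [h]
    · rw [Real.sign_of_pos h, abs_of_pos h]; ring
  have h2 : Real.sign a * |a| = a := by
    rcases lt_trichotomy a 0 with h | h | h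
    · rw [Real.sign_of_neg h, abs_of_neg h]; ring
    · exact absurd h ha
    · rw [Real.sign_of_pos h, abs_of_pos h]; ring
  have h3 : |Real.sign a| = 1 := by
    rcases lt_trichotomy a 0 with h | h | h
    · rw [Real.sign_of_neg h]; simp
    · exact absurd h ha
    · rw [Real.sign_of_pos h]; simp
  have : c * (Real.sign c * Real.sign a * 2) + a
      = Real.sign a * (2 * |c| + |a|) := by
    rw [mul_add, h2, ← h1]; ring
  rw [this, abs_mul, h3, one_mul,
    abs_of_nonneg (by positivity)]

/-- In the deterministic lower-bound construction: `c t` is the coefficient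
`c_t^t`, `a t` is `a_{t+1}^t`, and `d_t = sign(c_t^t)·sign(a_{t+1}^t)·2`, so
`c_{t+1}^{t+1} = c_t^t d_t + a_{t+1}^t`.  Then `|c_{t+1}^{t+1}| = 2|c_t^t| +
|a_{t+1}^t| ≥ 2|c_t^t|`, and since `|c_1^1| = 1` and `‖x_t‖ ≥ |c_t^t|`, the
state at time `d_x` satisfies `‖x_{d_x}‖ ≥ |c_{d_x}^{d_x}| ≥ 2^{d_x−1}`. -/
theorem stmt15 {dx : ℕ} (hdx : 1 ≤ dx)
    (c a : ℕ → ℝ) (x : ℕ → Fin dx → ℝ)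
    (ha : ∀ t, a t ≠ 0)
    (hc1 : |c 1| = 1)
    (hrec : ∀ t, 1 ≤ t →
      c (t + 1) = c t * (Real.sign (c t) * Real.sign (a t) * 2) + a t)
    (hx : ∀ t, |c t| ≤ euclNorm (x t)) :
    (∀ t, 1 ≤ t → |c (t + 1)| = 2 * |c t| + |a t| ∧ 2 * |c t| ≤ |c (t + 1)|) ∧
    (2 : ℝ) ^ (dx - 1) ≤ |c dx| ∧ |c dx| ≤ euclNorm (x dx) := by
  have main : ∀ t, 1 ≤ t → |c (t + 1)| = 2 * |c t| + |a t| ∧ 2 * |c t| ≤ |c (t + 1)| := by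
    intro t ht
    have := key_abs (c t) (a t) (ha t)
    rw [hrec t ht, this]
    exact ⟨rfl, by have := abs_nonneg (a t); linarith⟩
  refine ⟨main, ?_, hx dx⟩
  have grow : ∀ t, 1 ≤ t → (2 : ℝ) ^ (t - 1) ≤ |c t| := by
    intro t ht
    induction t with
    | zero => omega
    | succ n ih =>
      rcases Nat.eq_or_lt_of_le ht with h | h
      · simp [← h, hc1]
      · have hn : 1 ≤ n := by omega
        have h1 := ih hn
        have h2 := (main n hn).2
        have : (n + 1 - 1 : ℕ) = (n - 1) + 1 := by omega
        rw [this, pow_succ]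
        nlinarith [pow_pos (by norm_num : (0:ℝ) < 2) (n - 1)]
  exact grow dx hdx
end

section
/- Suppose (A, B) is (k, κ)-strongly controllable, so that C_k has full row rank and ‖(C_kC_kᵀ)⁻¹‖ ≤ κ. If u = C_kᵀ(C_kC_kᵀ)⁻¹v is the minimum-norm control reaching v, then the intermediate states of the noiseless trajectory x_{t+1} = Ax_t + Bu_t starting from x_1 = 0 satisfy ‖x_t‖² ≤ k β^{2k} κ ‖v‖² for all t ≤ k, where ‖A‖, ‖B‖ ≤ β and β ≥ 1. -/
open scoped Matrix.Norms.L2Operator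
open scoped Matrix

/-- Noiseless trajectory from the zero state: `traj A B u t` is the paper's
`x_{t+1}` (so `traj A B u 0 = x_1 = 0`, and `x_{t+1} = A x_t + B u_t`). -/
noncomputable def traj {dx du : ℕ} (A : Matrix (Fin dx) (Fin dx) ℝ)
    (B : Matrix (Fin dx) (Fin du) ℝ) (u : ℕ → Fin du → ℝ) : ℕ → Fin dx → ℝ
  | 0 => 0
  | t + 1 => A.mulVec (traj A B u t) + B.mulVec (u t)

/-! ### Auxiliary definitions and lemmas -/

/-- View a plain vector as an element of Euclidean space. -/
noncomputable def ev {n : Type*} [Fintype n] (x : n → ℝ) : EuclideanSpace ℝ n :=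
  (WithLp.linearEquiv 2 ℝ (n → ℝ)).symm x

lemma ev_apply {n : Type*} [Fintype n] (x : n → ℝ) (i : n) : ev x i = x i := rfl

lemma norm_ev_sq {n : Type*} [Fintype n] (x : n → ℝ) : ‖ev x‖ ^ 2 = ∑ i, x i ^ 2 := by
  rw [EuclideanSpace.norm_eq, Real.sq_sqrt (by positivity)]
  simp [ev_apply, sq_abs]

lemma enorm_eq_norm_ev {n : ℕ} (x : Fin n → ℝ) : enorm₂ x = ‖ev x‖ := by
  rw [EuclideanSpace.norm_eq]
  simp [enorm₂, ev_apply, sq_abs]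

lemma ev_mulVec_le {m n : Type*} [Fintype m] [Fintype n] [DecidableEq m] [DecidableEq n]
    (M : Matrix m n ℝ) (x : n → ℝ) :
    ‖ev (M.mulVec x)‖ ≤ ‖M‖ * ‖ev x‖ := M.l2_opNorm_mulVec (ev x)

lemma dot_eq_inner {n : Type*} [Fintype n] (x y : n → ℝ) :
    x ⬝ᵥ y = inner ℝ (ev x) (ev y) := by
  simp [PiLp.inner_apply, RCLike.inner_apply, ev_apply, dotProduct, mul_comm]

lemma rank_full_isUnit {d : ℕ} (M : Matrix (Fin d) (Fin d) ℝ) (h : M.rank = d) : IsUnit M := by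
  rw [← Matrix.mulVec_surjective_iff_isUnit]
  have htop : LinearMap.range M.mulVecLin = ⊤ := by
    apply Submodule.eq_top_of_finrank_eq
    rw [← Matrix.rank, h, Module.finrank_fin_fun]
  intro y
  obtain ⟨x, hx⟩ := LinearMap.range_eq_top.mp htop y
  exact ⟨x, hx⟩

lemma ev_sum {n : Type*} [Fintype n] {ι : Type*} (s : Finset ι) (f : ι → (n → ℝ)) :
    ev (∑ j ∈ s, f j) = ∑ j ∈ s, ev (f j) :=
  map_sum (WithLp.linearEquiv 2 ℝ (n → ℝ)).symm f s

lemma traj_sum {dx du : ℕ} (A : Matrix (Fin dx) (Fin dx) ℝ) (B : Matrix (Fin dx) (Fin du) ℝ)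
    (u : ℕ → Fin du → ℝ) (t : ℕ) :
    traj A B u t = ∑ j ∈ Finset.range t, (A ^ (t - 1 - j) * B).mulVec (u j) := by
  induction t with
  | zero => simp [traj]
  | succ t ih =>
    rw [traj, ih, Finset.sum_range_succ]
    have h1 : A.mulVec (∑ j ∈ Finset.range t, (A ^ (t - 1 - j) * B).mulVec (u j))
        = ∑ j ∈ Finset.range t, (A ^ (t + 1 - 1 - j) * B).mulVec (u j) := by
      rw [← Matrix.mulVecLin_apply, map_sum]
      refine Finset.sum_congr rfl fun j hj => ?_
      have hj' : j < t := Finset.mem_range.mp hj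
      have he : t - 1 - j + 1 = t + 1 - 1 - j := by omega
      rw [Matrix.mulVecLin_apply, Matrix.mulVec_mulVec, ← Matrix.mul_assoc, ← pow_succ', he]
    rw [h1]
    congr 1
    simp

theorem stmt17 {dx du : ℕ} (k : ℕ) (A : Matrix (Fin dx) (Fin dx) ℝ)
    (B : Matrix (Fin dx) (Fin du) ℝ) (κ β : ℝ) (hβ : 1 ≤ β)
    (hsc : StronglyControllable A B k κ)
    (hA : ‖A‖ ≤ β) (hB : ‖B‖ ≤ β)
    (v : Fin dx → ℝ) :
    -- the minimum-norm control reaching `v`, with `(u_k, …, u_1)` the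
    -- concatenation `C_kᵀ (C_k C_kᵀ)⁻¹ v`
    let Ck := ctrb k A B
    let wvec := Ckᵀ.mulVec ((Ck * Ckᵀ)⁻¹.mulVec v)
    let u : ℕ → Fin du → ℝ :=
      fun t l => if h : t < k then wvec ((⟨t, h⟩ : Fin k).rev, l) else 0
    -- every intermediate state `x_t`, `t ≤ k` (i.e. `traj` index `< k`),
    -- satisfies `‖x_t‖² ≤ k β^{2k} κ ‖v‖²`
    ∀ t : ℕ, t < k →
      enorm₂ (traj A B u t) ^ 2 ≤ (k : ℝ) * β ^ (2 * k) * κ * enorm₂ v ^ 2 := by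
  intro Ck wvec u t ht
  classical
  obtain ⟨hrank, hκ⟩ := hsc
  have hκ0 : 0 ≤ κ := le_trans (norm_nonneg _) hκ
  have hβ0 : (0 : ℝ) ≤ β := le_trans zero_le_one hβ
  have hUnit : IsUnit (Ck * Ckᵀ) := by
    apply rank_full_isUnit
    rw [Matrix.rank_self_mul_transpose]
    exact hrank
  have hdet : IsUnit (Ck * Ckᵀ).det := (Matrix.isUnit_iff_isUnit_det _).mp hUnit
  set G := (Ck * Ckᵀ)⁻¹ with hGdef
  set g := G.mulVec v with hg
  -- the total energy of the control equals `g ⬝ᵥ v`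
  have hWsq : ∑ p : Fin k × Fin du, wvec p ^ 2 = g ⬝ᵥ v := by
    have h1 : ∑ p : Fin k × Fin du, wvec p ^ 2 = wvec ⬝ᵥ wvec := by
      simp [dotProduct, sq]
    rw [h1]
    show (Ckᵀ.mulVec g) ⬝ᵥ (Ckᵀ.mulVec g) = g ⬝ᵥ v
    calc (Ckᵀ.mulVec g) ⬝ᵥ (Ckᵀ.mulVec g)
        = (g ᵥ* Ck) ⬝ᵥ (Ckᵀ.mulVec g) := by rw [Matrix.mulVec_transpose]
      _ = g ⬝ᵥ (Ck.mulVec (Ckᵀ.mulVec g)) := (Matrix.dotProduct_mulVec g Ck _).symm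
      _ = g ⬝ᵥ v := by
          rw [Matrix.mulVec_mulVec, hg, Matrix.mulVec_mulVec, hGdef,
            Matrix.mul_nonsing_inv _ hdet, Matrix.one_mulVec]
  -- the total energy is at most `κ ‖v‖²`
  have hS : ∑ p : Fin k × Fin du, wvec p ^ 2 ≤ κ * ‖ev v‖ ^ 2 := by
    rw [hWsq, dot_eq_inner]
    calc (inner ℝ (ev g) (ev v) : ℝ) ≤ ‖ev g‖ * ‖ev v‖ := real_inner_le_norm _ _
      _ ≤ (κ * ‖ev v‖) * ‖ev v‖ := by
          apply mul_le_mul_of_nonneg_right _ (norm_nonneg _)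
          calc ‖ev g‖ ≤ ‖G‖ * ‖ev v‖ := by rw [hg]; exact ev_mulVec_le G v
            _ ≤ κ * ‖ev v‖ := mul_le_mul_of_nonneg_right hκ (norm_nonneg _)
      _ = κ * ‖ev v‖ ^ 2 := by ring
  -- unfolding the control
  have hu : ∀ j : Fin k, u (j : ℕ) = fun l => wvec (j.rev, l) := by
    intro j
    funext l
    simp only [u]
    rw [dif_pos j.isLt]
  -- sum of control energies equals total energy
  have hsum_u : ∑ j ∈ Finset.range k, ∑ l, u j l ^ 2 = ∑ p : Fin k × Fin du, wvec p ^ 2 := by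
    rw [← Fin.sum_univ_eq_sum_range (fun j => ∑ l, u j l ^ 2) k, Fintype.sum_prod_type]
    conv_rhs => rw [← Equiv.sum_comp (Fin.revPerm : Equiv.Perm (Fin k))
      (fun i : Fin k => ∑ l, wvec (i, l) ^ 2)]
    refine Finset.sum_congr rfl fun i _ => ?_
    rw [hu i]
    simp
  -- per-step matrix norm bound
  have hMB : ∀ m : ℕ, ‖A ^ m * B‖ ≤ β ^ (m + 1) := by
    intro m
    induction m with
    | zero => simpa using hB
    | succ m ih =>
      have hrw : A ^ (m + 1) * B = A * (A ^ m * B) := by rw [pow_succ', Matrix.mul_assoc]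
      rw [hrw]
      calc ‖A * (A ^ m * B)‖ ≤ ‖A‖ * ‖A ^ m * B‖ := Matrix.l2_opNorm_mul _ _
        _ ≤ β * β ^ (m + 1) := mul_le_mul hA ih (norm_nonneg _) hβ0
        _ = β ^ (m + 1 + 1) := by ring
  -- bound on the state norm
  have hx : ‖ev (traj A B u t)‖ ≤ ∑ j ∈ Finset.range t, β ^ k * ‖ev (u j)‖ := by
    rw [traj_sum, ev_sum]
    refine (norm_sum_le _ _).trans (Finset.sum_le_sum fun j hj => ?_)
    have hj' : j < t := Finset.mem_range.mp hj
    calc ‖ev ((A ^ (t - 1 - j) * B).mulVec (u j))‖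
        ≤ ‖A ^ (t - 1 - j) * B‖ * ‖ev (u j)‖ := ev_mulVec_le _ _
      _ ≤ β ^ k * ‖ev (u j)‖ := by
          apply mul_le_mul_of_nonneg_right _ (norm_nonneg _)
          refine (hMB _).trans (pow_le_pow_right₀ hβ ?_)
          omega
  have h2 : enorm₂ (traj A B u t) ^ 2 ≤ (∑ j ∈ Finset.range t, β ^ k * ‖ev (u j)‖) ^ 2 := by
    rw [enorm_eq_norm_ev]
    exact pow_le_pow_left₀ (norm_nonneg _) hx 2
  refine h2.trans ?_
  have h3 : (∑ j ∈ Finset.range t, β ^ k * ‖ev (u j)‖) ^ 2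
      = β ^ (2 * k) * (∑ j ∈ Finset.range t, ‖ev (u j)‖) ^ 2 := by
    rw [← Finset.mul_sum, mul_pow, ← pow_mul, mul_comm k 2]
  rw [h3]
  have h4 : (∑ j ∈ Finset.range t, ‖ev (u j)‖) ^ 2
      ≤ (t : ℝ) * ∑ j ∈ Finset.range t, ‖ev (u j)‖ ^ 2 := by
    simpa using sq_sum_le_card_mul_sum_sq (s := Finset.range t) (f := fun j => ‖ev (u j)‖)
  have hSt : ∑ j ∈ Finset.range t, ‖ev (u j)‖ ^ 2 ≤ κ * ‖ev v‖ ^ 2 := by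
    have hsub : ∑ j ∈ Finset.range t, ‖ev (u j)‖ ^ 2 ≤ ∑ j ∈ Finset.range k, ‖ev (u j)‖ ^ 2 :=
      Finset.sum_le_sum_of_subset_of_nonneg (Finset.range_subset_range.mpr ht.le)
        (fun _ _ _ => by positivity)
    refine hsub.trans ?_
    have heq : ∑ j ∈ Finset.range k, ‖ev (u j)‖ ^ 2 = ∑ p : Fin k × Fin du, wvec p ^ 2 := by
      rw [← hsum_u]
      exact Finset.sum_congr rfl fun j _ => norm_ev_sq _
    rw [heq]
    exact hS
  have hsumnn : (0 : ℝ) ≤ ∑ j ∈ Finset.range t, ‖ev (u j)‖ ^ 2 := by positivity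
  calc β ^ (2 * k) * (∑ j ∈ Finset.range t, ‖ev (u j)‖) ^ 2
      ≤ β ^ (2 * k) * ((t : ℝ) * ∑ j ∈ Finset.range t, ‖ev (u j)‖ ^ 2) :=
        mul_le_mul_of_nonneg_left h4 (by positivity)
    _ ≤ β ^ (2 * k) * ((k : ℝ) * (κ * ‖ev v‖ ^ 2)) := by
        apply mul_le_mul_of_nonneg_left _ (by positivity)
        exact mul_le_mul (by exact_mod_cast ht.le) hSt hsumnn (by positivity)
    _ = (k : ℝ) * β ^ (2 * k) * κ * enorm₂ v ^ 2 := by rw [enorm_eq_norm_ev]; ring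
end
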